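/- arXiv:1010.4432 — 6 statements merged into one kernel-verified Lean document; each statement's English description precedes it below -/
import Mathlib

section
/- If f : [0,1] → ℝ is bounded and non-decreasing, then the function Uf defined by (Uf)(x) = ∑_{i=1}^∞ (x+1)/((x+i)(x+i+1)) · f(1/(x+i)) is non-increasing on [0,1]. -/
open Filter Finset Topology

private lemma abel_aux (a g : ℕ → ℝ) (n : ℕ) :
    ∑ i ∈ Finset.range n, (a i - a (i+1)) * g i
      = a 0 * g 0 - a n * g n + ∑ i ∈ Finset.range n, a (i+1) * (g (i+1) - g i) := by
  induction n with
  | zero => simp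
  | succ n ih => rw [Finset.sum_range_succ, Finset.sum_range_succ, ih]; ring

private lemma Ppos (z : ℝ) (hz : 0 ≤ z) (i : ℕ) :
    0 ≤ (z + 1) / ((z + ((i:ℝ) + 1)) * (z + ((i:ℝ) + 1) + 1)) := by
  have hi : (0:ℝ) ≤ i := Nat.cast_nonneg i
  have h1 : (0:ℝ) < z + ((i:ℝ) + 1) := by linarith
  have h2 : (0:ℝ) < z + ((i:ℝ) + 1) + 1 := by linarith
  have h3 : (0:ℝ) ≤ z + 1 := by linarith
  positivity

private lemma Ptel (z : ℝ) (hz : 0 ≤ z) (i : ℕ) :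
    (z + 1) / ((z + ((i:ℝ) + 1)) * (z + ((i:ℝ) + 1) + 1))
      = (z + 1) / (z + (i:ℝ) + 1) - (z + 1) / (z + ((i:ℝ) + 1) + 1) := by
  have hi : (0:ℝ) ≤ i := Nat.cast_nonneg i
  have h1 : (z + ((i:ℝ) + 1)) ≠ 0 := by positivity
  have h2 : (z + ((i:ℝ) + 1) + 1) ≠ 0 := by positivity
  have h3 : (z + (i:ℝ) + 1) ≠ 0 := by positivity
  field_simp
  ring

private lemma sumP (z : ℝ) (hz : 0 ≤ z) :
    Summable (fun i : ℕ => (z + 1) / ((z + ((i:ℝ) + 1)) * (z + ((i:ℝ) + 1) + 1))) := by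
  apply summable_of_sum_range_le (c := 1) (Ppos z hz)
  intro n
  have heq : ∑ i ∈ Finset.range n, (z + 1) / ((z + ((i:ℝ) + 1)) * (z + ((i:ℝ) + 1) + 1))
      = (z + 1) / (z + (0:ℕ) + 1) - (z + 1) / (z + (n:ℕ) + 1) := by
    rw [← Finset.sum_range_sub' (f := fun i : ℕ => (z + 1) / (z + (i:ℝ) + 1))]
    refine Finset.sum_congr rfl fun i _ => ?_
    rw [Ptel z hz i]
    push_cast
    ring_nf
  rw [heq]
  have hn : (0:ℝ) ≤ n := Nat.cast_nonneg n
  have h1 : (z + 1) / (z + (0:ℕ) + 1) = 1 := by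
    push_cast
    field_simp
    ring
  rw [h1]
  have : 0 ≤ (z + 1) / (z + (n:ℕ) + 1) := by positivity
  linarith

private lemma sumPg (z : ℝ) (hz : 0 ≤ z) (c : ℕ → ℝ) (C : ℝ) (hc : ∀ i, |c i| ≤ C) :
    Summable (fun i : ℕ => (z + 1) / ((z + ((i:ℝ) + 1)) * (z + ((i:ℝ) + 1) + 1)) * c i) := by
  apply Summable.of_abs
  apply Summable.of_nonneg_of_le (fun i => abs_nonneg _) _ ((sumP z hz).mul_left C)
  intro i
  rw [abs_mul, abs_of_nonneg (Ppos z hz i), mul_comm C]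
  exact mul_le_mul_of_nonneg_left (hc i) (Ppos z hz i)

private lemma sumDelta (z : ℝ) (hz : 0 ≤ z) (g : ℕ → ℝ) (C : ℝ)
    (hgC : ∀ i, |g i| ≤ C) (hganti : ∀ i, g (i+1) ≤ g i) :
    Summable (fun i : ℕ => (z + 1) / (z + ((i:ℝ) + 1) + 1) * (g (i+1) - g i)) := by
  have ha : ∀ i : ℕ, 0 ≤ (z + 1) / (z + ((i:ℝ) + 1) + 1) ∧
      (z + 1) / (z + ((i:ℝ) + 1) + 1) ≤ 1 := by
    intro i
    have hi : (0:ℝ) ≤ i := Nat.cast_nonneg i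
    have h2 : (0:ℝ) < z + ((i:ℝ) + 1) + 1 := by linarith
    constructor
    · positivity
    · rw [div_le_one h2]; linarith
  rw [← summable_neg_iff]
  apply summable_of_sum_range_le (c := 2 * C)
  · intro i
    have := hganti i
    have h0 := (ha i).1
    nlinarith
  · intro n
    have hle : ∀ i ∈ Finset.range n,
        -((z + 1) / (z + ((i:ℝ) + 1) + 1) * (g (i+1) - g i)) ≤ g i - g (i+1) := by
      intro i _
      have := hganti i
      have h0 := (ha i).1
      have h1 := (ha i).2
      nlinarith
    calc ∑ i ∈ Finset.range n, -((z + 1) / (z + ((i:ℝ) + 1) + 1) * (g (i+1) - g i))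
        ≤ ∑ i ∈ Finset.range n, (g i - g (i+1)) := Finset.sum_le_sum hle
      _ = g 0 - g n := Finset.sum_range_sub' g n
      _ ≤ |g 0| + |g n| := by
          have := abs_le.mp (hgC 0)
          have := abs_le.mp (hgC n)
          have h1 := le_abs_self (g 0)
          have h2 := neg_abs_le (g n)
          linarith
      _ ≤ 2 * C := by
          have := hgC 0
          have := hgC n
          linarith

private lemma key (z : ℝ) (hz : 0 ≤ z) (g : ℕ → ℝ) (C : ℝ)
    (hgC : ∀ i, |g i| ≤ C) (hganti : ∀ i, g (i+1) ≤ g i) :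
    ∑' i : ℕ, (z + 1) / ((z + ((i:ℝ) + 1)) * (z + ((i:ℝ) + 1) + 1)) * g i
      = g 0 + ∑' i : ℕ, (z + 1) / (z + ((i:ℝ) + 1) + 1) * (g (i+1) - g i) := by
  have hC0 : 0 ≤ C := (abs_nonneg _).trans (hgC 0)
  set a : ℕ → ℝ := fun i => (z + 1) / (z + (i:ℝ) + 1) with ha_def
  have hsum1 := sumPg z hz g C hgC
  have hsumΔ := sumDelta z hz g C hgC hganti
  -- partial sums identity
  have hpart : ∀ n : ℕ,
      ∑ i ∈ Finset.range n, (z + 1) / ((z + ((i:ℝ) + 1)) * (z + ((i:ℝ) + 1) + 1)) * g i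
        = a 0 * g 0 - a n * g n
          + ∑ i ∈ Finset.range n, (z + 1) / (z + ((i:ℝ) + 1) + 1) * (g (i+1) - g i) := by
    intro n
    have h1 : ∀ i ∈ Finset.range n,
        (z + 1) / ((z + ((i:ℝ) + 1)) * (z + ((i:ℝ) + 1) + 1)) * g i
          = (a i - a (i+1)) * g i := by
      intro i _
      rw [Ptel z hz i]
      simp only [ha_def]
      push_cast
      ring_nf
    rw [Finset.sum_congr rfl h1, abel_aux]
    congr 1
    refine Finset.sum_congr rfl fun i _ => ?_
    simp only [ha_def]
    push_cast
    ring_nf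
  -- limits
  have haz : Tendsto (fun n : ℕ => a n) atTop (𝓝 0) := by
    apply Tendsto.div_atTop (tendsto_const_nhds)
    have h := tendsto_natCast_atTop_atTop (R := ℝ)
    have h2 := tendsto_atTop_add_const_left atTop z h
    exact tendsto_atTop_add_const_right atTop 1 h2
  have hag : Tendsto (fun n : ℕ => a n * g n) atTop (𝓝 0) := by
    have htend : Tendsto (fun n : ℕ => C * a n) atTop (𝓝 0) := by
      simpa using haz.const_mul C
    refine squeeze_zero_norm (fun n => ?_) htend
    have h0 : 0 ≤ a n := by
      have hi : (0:ℝ) ≤ n := Nat.cast_nonneg n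
      have : (0:ℝ) < z + (n:ℝ) + 1 := by linarith
      positivity
    rw [Real.norm_eq_abs, abs_mul, abs_of_nonneg h0, mul_comm C]
    exact mul_le_mul_of_nonneg_left (hgC n) h0
  have ha0 : a 0 = 1 := by
    simp only [ha_def]
    push_cast
    have : (0:ℝ) < z + 1 := by linarith
    field_simp
    ring
  have hT : Tendsto
      (fun n : ℕ => ∑ i ∈ Finset.range n,
        (z + 1) / ((z + ((i:ℝ) + 1)) * (z + ((i:ℝ) + 1) + 1)) * g i) atTop
      (𝓝 (g 0 + ∑' i : ℕ, (z + 1) / (z + ((i:ℝ) + 1) + 1) * (g (i+1) - g i))) := by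
    simp only [hpart, ha0, one_mul]
    have h3 := hsumΔ.hasSum.tendsto_sum_nat
    have h4 := (tendsto_const_nhds (x := g 0) (f := atTop (α := ℕ))).sub hag
    have h5 := h4.add h3
    rw [sub_zero] at h5
    exact h5
  exact tendsto_nhds_unique hsum1.hasSum.tendsto_sum_nat hT

theorem perron_frobenius_antitone (f : ℝ → ℝ)
    (hbdd : ∃ C : ℝ, ∀ x ∈ Set.Icc (0:ℝ) 1, |f x| ≤ C)
    (hmono : MonotoneOn f (Set.Icc (0:ℝ) 1)) :
    AntitoneOn
      (fun x : ℝ => ∑' i : ℕ,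
        (x + 1) / ((x + (i + 1)) * (x + (i + 1) + 1)) * f (1 / (x + (i + 1))))
      (Set.Icc 0 1) := by
  intro x hx y hy hxy
  obtain ⟨C, hC⟩ := hbdd
  obtain ⟨hx0, hx1⟩ := hx
  obtain ⟨hy0, hy1⟩ := hy
  -- membership of 1/(z+i+1) in Icc 0 1
  have hmem : ∀ z : ℝ, 0 ≤ z → ∀ i : ℕ, 1 / (z + ((i:ℝ) + 1)) ∈ Set.Icc (0:ℝ) 1 := by
    intro z hz i
    have hi : (0:ℝ) ≤ i := Nat.cast_nonneg i
    have hpos : (0:ℝ) < z + ((i:ℝ) + 1) := by linarith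
    constructor
    · positivity
    · rw [div_le_one hpos]; linarith
  set g : ℕ → ℝ := fun i => f (1 / (y + ((i:ℝ) + 1))) with hg_def
  have hgC : ∀ i, |g i| ≤ C := fun i => hC _ (hmem y hy0 i)
  have hganti : ∀ i, g (i+1) ≤ g i := by
    intro i
    apply hmono (hmem y hy0 (i+1)) (hmem y hy0 i)
    have hi : (0:ℝ) ≤ i := Nat.cast_nonneg i
    apply one_div_le_one_div_of_le (by linarith)
    push_cast
    linarith
  -- step 1: Uf x ≥ ∑' P x i * g i
  have hfxC : ∀ i : ℕ, |f (1 / (x + ((i:ℝ) + 1)))| ≤ C := fun i => hC _ (hmem x hx0 i)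
  have step1 : ∑' i : ℕ, (x + 1) / ((x + ((i:ℝ) + 1)) * (x + ((i:ℝ) + 1) + 1)) * g i
      ≤ ∑' i : ℕ, (x + 1) / ((x + ((i:ℝ) + 1)) * (x + ((i:ℝ) + 1) + 1))
          * f (1 / (x + ((i:ℝ) + 1))) := by
    apply Summable.tsum_le_tsum _ (sumPg x hx0 g C hgC) (sumPg x hx0 _ C hfxC)
    intro i
    apply mul_le_mul_of_nonneg_left _ (Ppos x hx0 i)
    apply hmono (hmem y hy0 i) (hmem x hx0 i)
    apply one_div_le_one_div_of_le
    · have hi : (0:ℝ) ≤ i := Nat.cast_nonneg i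
      linarith
    · linarith
  -- step 2: key identities
  have hkx := key x hx0 g C hgC hganti
  have hky := key y hy0 g C hgC hganti
  -- step 3: compare the remainder tsums
  have step3 : ∑' i : ℕ, (y + 1) / (y + ((i:ℝ) + 1) + 1) * (g (i+1) - g i)
      ≤ ∑' i : ℕ, (x + 1) / (x + ((i:ℝ) + 1) + 1) * (g (i+1) - g i) := by
    apply Summable.tsum_le_tsum _ (sumDelta y hy0 g C hgC hganti) (sumDelta x hx0 g C hgC hganti)
    intro i
    have hΔ : g (i+1) - g i ≤ 0 := by linarith [hganti i]
    have hi : (0:ℝ) ≤ i := Nat.cast_nonneg i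
    have hx2 : (0:ℝ) < x + ((i:ℝ) + 1) + 1 := by linarith
    have hy2 : (0:ℝ) < y + ((i:ℝ) + 1) + 1 := by linarith
    have hdiv : (x + 1) / (x + ((i:ℝ) + 1) + 1) ≤ (y + 1) / (y + ((i:ℝ) + 1) + 1) := by
      rw [div_le_div_iff₀ hx2 hy2]
      nlinarith
    nlinarith
  -- combine
  simp only
  calc ∑' i : ℕ, (y + 1) / ((y + ((i:ℝ) + 1)) * (y + ((i:ℝ) + 1) + 1))
          * f (1 / (y + ((i:ℝ) + 1)))
      = g 0 + ∑' i : ℕ, (y + 1) / (y + ((i:ℝ) + 1) + 1) * (g (i+1) - g i) := hky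
    _ ≤ g 0 + ∑' i : ℕ, (x + 1) / (x + ((i:ℝ) + 1) + 1) * (g (i+1) - g i) := by linarith
    _ = ∑' i : ℕ, (x + 1) / ((x + ((i:ℝ) + 1)) * (x + ((i:ℝ) + 1) + 1)) * g i := hkx.symm
    _ ≤ _ := step1
end

section
/- The function h(x) = ∑_{i=1}^∞ (x+1)/((x+i)^3 (x+i+1)) is non-increasing on [0,1], and consequently h(x) ≤ h(0) = ∑_{i=1}^∞ 1/(i^3(i+1)) for all x ∈ [0,1]. -/
open Filter Topology

set_option maxHeartbeats 1000000

private lemma hb_summable : Summable (fun i : ℕ => (2:ℝ)/((i:ℝ)+1)^2) := by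
  have h1 : Summable (fun n : ℕ => 1 / ((n:ℝ)) ^ 2) :=
    Real.summable_one_div_nat_pow.mpr one_lt_two
  have h2 : Summable (fun n : ℕ => 1 / (((n+1:ℕ):ℝ)) ^ 2) :=
    (summable_nat_add_iff 1).mpr h1
  have h3 : Summable (fun n : ℕ => 1 / ((n:ℝ)+1) ^ 2) := by
    apply h2.congr; intro n; push_cast; ring
  simpa [div_eq_mul_inv] using h3.mul_left 2

private lemma f_nonneg {x : ℝ} (hx : 0 ≤ x) (i : ℕ) :
    0 ≤ (x + 1) / ((x + ((i:ℝ) + 1)) ^ 3 * (x + ((i:ℝ) + 1) + 1)) := by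
  have : (0:ℝ) ≤ i := Nat.cast_nonneg i
  positivity

private lemma f_le {x : ℝ} (hx : 0 ≤ x) (hx1 : x ≤ 1) (i : ℕ) :
    (x + 1) / ((x + ((i:ℝ) + 1)) ^ 3 * (x + ((i:ℝ) + 1) + 1)) ≤ 2/((i:ℝ)+1)^2 := by
  have hi : (0:ℝ) ≤ i := Nat.cast_nonneg i
  have e2 : ((i:ℝ)+1)^3 ≤ (x+((i:ℝ)+1))^3 := by
    apply pow_le_pow_left₀ (by linarith) (by linarith)
  have key : (x+1) * (((i:ℝ)+1)^2) ≤ 2 * ((x + ((i:ℝ) + 1)) ^ 3 * (x + ((i:ℝ) + 1) + 1)) := by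
    calc (x+1) * (((i:ℝ)+1)^2) ≤ 2 * (((i:ℝ)+1)^3) := by nlinarith [sq_nonneg ((i:ℝ)+1)]
      _ ≤ 2 * ((x+((i:ℝ)+1))^3) := by linarith
      _ ≤ 2 * ((x + ((i:ℝ) + 1)) ^ 3 * (x + ((i:ℝ) + 1) + 1)) := by
          nlinarith [pow_nonneg (show (0:ℝ) ≤ x+((i:ℝ)+1) by linarith) 3]
  rw [div_le_div_iff₀ (by positivity) (by positivity)]
  linarith

private lemma summable_f {x : ℝ} (hx : 0 ≤ x) (hx1 : x ≤ 1) :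
    Summable (fun i : ℕ => (x + 1) / ((x + ((i:ℝ) + 1)) ^ 3 * (x + ((i:ℝ) + 1) + 1))) :=
  Summable.of_nonneg_of_le (f_nonneg hx) (f_le hx hx1) hb_summable

private lemma t_nonneg {x : ℝ} (hx : 0 ≤ x) (i : ℕ) :
    0 ≤ (x + 1) / ((x + ((i:ℝ) + 1)) * (x + ((i:ℝ) + 1) + 1)) := by
  have : (0:ℝ) ≤ i := Nat.cast_nonneg i
  positivity

private lemma t_le {x : ℝ} (hx : 0 ≤ x) (hx1 : x ≤ 1) (i : ℕ) :
    (x + 1) / ((x + ((i:ℝ) + 1)) * (x + ((i:ℝ) + 1) + 1)) ≤ 2/((i:ℝ)+1)^2 := by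
  have hi : (0:ℝ) ≤ i := Nat.cast_nonneg i
  have key : (x+1) * (((i:ℝ)+1)^2) ≤ 2 * ((x + ((i:ℝ) + 1)) * (x + ((i:ℝ) + 1) + 1)) := by
    nlinarith [sq_nonneg ((i:ℝ)+1), mul_nonneg hx hi, mul_nonneg hx hx, sq_nonneg x]
  rw [div_le_div_iff₀ (by positivity) (by positivity)]
  linarith

private lemma summable_t {x : ℝ} (hx : 0 ≤ x) (hx1 : x ≤ 1) :
    Summable (fun i : ℕ => (x + 1) / ((x + ((i:ℝ) + 1)) * (x + ((i:ℝ) + 1) + 1))) :=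
  Summable.of_nonneg_of_le (t_nonneg hx) (t_le hx hx1) hb_summable

private lemma tsum_t {x : ℝ} (hx : 0 ≤ x) (hx1 : x ≤ 1) :
    ∑' i : ℕ, (x + 1) / ((x + ((i:ℝ) + 1)) * (x + ((i:ℝ) + 1) + 1)) = 1 := by
  set t := fun i : ℕ => (x + 1) / ((x + ((i:ℝ) + 1)) * (x + ((i:ℝ) + 1) + 1)) with ht_def
  set d := fun i : ℕ => (x + 1) / (x + ((i:ℝ) + 1)) with hd_def
  have hpos : ∀ i : ℕ, (0:ℝ) < x + ((i:ℝ) + 1) := by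
    intro i; have : (0:ℝ) ≤ i := Nat.cast_nonneg i; linarith
  have hti : ∀ i : ℕ, t i = d i - d (i+1) := by
    intro i
    have h1 : x + ((i:ℝ) + 1) ≠ 0 := (hpos i).ne'
    have h2 : x + (((i:ℝ) + 1) + 1) ≠ 0 := by have := hpos i; intro h; linarith
    simp only [ht_def, hd_def]
    push_cast
    rw [div_sub_div _ _ h1 (by intro h; apply h2; linarith)]
    rw [div_eq_div_iff (by have := hpos i; positivity) (by have := hpos i; nlinarith)]
    ring
  have hkey : ∀ n : ℕ, ∑ i ∈ Finset.range n, t i = d 0 - d n := by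
    intro n
    rw [Finset.sum_congr rfl (fun i _ => hti i), Finset.sum_range_sub' d n]
  have hd0 : d 0 = 1 := by
    simp only [hd_def, Nat.cast_zero, zero_add]
    exact div_self (by linarith)
  have hdlim : Tendsto d atTop (𝓝 0) := by
    apply Tendsto.div_atTop tendsto_const_nhds
    exact tendsto_atTop_add_const_left atTop x
      (tendsto_atTop_add_const_right atTop 1 tendsto_natCast_atTop_atTop)
  have hlim1 : Tendsto (fun n => ∑ i ∈ Finset.range n, t i) atTop (𝓝 1) := by
    simp only [hkey, hd0]
    simpa using hdlim.const_sub 1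
  have hlim2 := (summable_t hx hx1).hasSum.tendsto_sum_nat
  exact tendsto_nhds_unique hlim2 hlim1

private lemma summable_G {x : ℝ} (hx : 0 ≤ x) (hx1 : x ≤ 1) :
    Summable (fun i : ℕ => (x + 1) * (1 - (x + ((i:ℝ) + 1))) / (x + ((i:ℝ) + 1)) ^ 3) := by
  apply ((summable_f hx hx1).sub (summable_t hx hx1)).congr
  intro i
  have hpos : (0:ℝ) < x + ((i:ℝ) + 1) := by
    have : (0:ℝ) ≤ i := Nat.cast_nonneg i; linarith
  have h2 : (0:ℝ) < x + ((i:ℝ) + 1) + 1 := by linarith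
  field_simp
  ring

private lemma h_eq {x : ℝ} (hx : 0 ≤ x) (hx1 : x ≤ 1) :
    ∑' i : ℕ, (x + 1) / ((x + ((i:ℝ) + 1)) ^ 3 * (x + ((i:ℝ) + 1) + 1)) =
      1 + ∑' i : ℕ, (x + 1) * (1 - (x + ((i:ℝ) + 1))) / (x + ((i:ℝ) + 1)) ^ 3 := by
  have hfi : ∀ i : ℕ, (x + 1) / ((x + ((i:ℝ) + 1)) ^ 3 * (x + ((i:ℝ) + 1) + 1)) =
      (x + 1) / ((x + ((i:ℝ) + 1)) * (x + ((i:ℝ) + 1) + 1)) +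
      (x + 1) * (1 - (x + ((i:ℝ) + 1))) / (x + ((i:ℝ) + 1)) ^ 3 := by
    intro i
    have hpos : (0:ℝ) < x + ((i:ℝ) + 1) := by
      have : (0:ℝ) ≤ i := Nat.cast_nonneg i; linarith
    have h2 : (0:ℝ) < x + ((i:ℝ) + 1) + 1 := by linarith
    field_simp
    ring
  rw [tsum_congr hfi, Summable.tsum_add (summable_t hx hx1) (summable_G hx hx1), tsum_t hx hx1]

private lemma G_anti (i : ℕ) :
    AntitoneOn (fun x : ℝ => (x + 1) * (1 - (x + ((i:ℝ) + 1))) / (x + ((i:ℝ) + 1)) ^ 3)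
      (Set.Icc 0 1) := by
  set a : ℝ := (i:ℝ) + 1 with ha_def
  have ha : (1:ℝ) ≤ a := by
    have : (0:ℝ) ≤ i := Nat.cast_nonneg i
    simp only [ha_def]; linarith
  have hd : ∀ x : ℝ, 0 ≤ x → HasDerivAt (fun x : ℝ => (x + 1) * (1 - (x + a)) / (x + a) ^ 3)
      (((1 * (1 - (x + a)) + (x + 1) * (-1)) * (x + a) ^ 3 -
        (x + 1) * (1 - (x + a)) * (↑3 * (x + a) ^ 2 * 1)) / ((x + a) ^ 3) ^ 2) x := by
    intro x hxx
    have hxa : x + a ≠ 0 := by intro h; linarith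
    have h1 : HasDerivAt (fun x : ℝ => x + 1) 1 x := (hasDerivAt_id x).add_const 1
    have h2 : HasDerivAt (fun x : ℝ => 1 - (x + a)) (-1) x := by
      simpa using ((hasDerivAt_id x).add_const a).const_sub 1
    have hn : HasDerivAt (fun x : ℝ => (x + 1) * (1 - (x + a)))
        (1 * (1 - (x + a)) + (x + 1) * (-1)) x := h1.mul h2
    have hden : HasDerivAt (fun x : ℝ => (x + a) ^ 3) (↑3 * (x + a) ^ 2 * 1) x :=
      ((hasDerivAt_id x).add_const a).pow 3
    exact hn.div hden (pow_ne_zero 3 hxa)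
  apply antitoneOn_of_deriv_nonpos (convex_Icc 0 1)
  · intro x hx
    exact (hd x hx.1).differentiableAt.continuousAt.continuousWithinAt
  · rw [interior_Icc]
    intro x hx
    exact (hd x hx.1.le).differentiableAt.differentiableWithinAt
  · rw [interior_Icc]
    intro x hx
    rw [(hd x hx.1.le).deriv]
    apply div_nonpos_of_nonpos_of_nonneg _ (by positivity)
    have heq : (1 * (1 - (x + a)) + (x + 1) * (-1)) * (x + a) ^ 3 -
        (x + 1) * (1 - (x + a)) * (↑3 * (x + a) ^ 2 * 1) =
        (x + a) ^ 2 * (x ^ 2 - (a ^ 2 - 3 * a + 3)) := by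
      push_cast
      ring
    rw [heq]
    apply mul_nonpos_of_nonneg_of_nonpos (by positivity)
    have hii : (i:ℝ) ≤ (i:ℝ) ^ 2 := by
      exact_mod_cast Nat.le_self_pow two_ne_zero i
    have hx1 := hx.1
    have hx2 := hx.2
    simp only [ha_def]
    nlinarith

theorem h_antitone_and_bounded :
    AntitoneOn
      (fun x : ℝ => ∑' i : ℕ, (x + 1) / ((x + (i + 1)) ^ 3 * (x + (i + 1) + 1)))
      (Set.Icc 0 1) ∧
    ∀ x ∈ Set.Icc (0:ℝ) 1,
      (∑' i : ℕ, (x + 1) / ((x + (i + 1)) ^ 3 * (x + (i + 1) + 1))) ≤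
        ∑' i : ℕ, 1 / (((i : ℝ) + 1) ^ 3 * ((i + 1) + 1)) := by
  have hA : AntitoneOn
      (fun x : ℝ => ∑' i : ℕ, (x + 1) / ((x + ((i:ℝ) + 1)) ^ 3 * (x + ((i:ℝ) + 1) + 1)))
      (Set.Icc 0 1) := by
    intro x hx y hy hxy
    show (∑' i : ℕ, (y + 1) / ((y + ((i:ℝ) + 1)) ^ 3 * (y + ((i:ℝ) + 1) + 1))) ≤
      ∑' i : ℕ, (x + 1) / ((x + ((i:ℝ) + 1)) ^ 3 * (x + ((i:ℝ) + 1) + 1))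
    rw [h_eq hx.1 hx.2, h_eq hy.1 hy.2]
    have hle := Summable.tsum_le_tsum (fun i => G_anti i hx hy hxy) (summable_G hy.1 hy.2)
      (summable_G hx.1 hx.2)
    linarith
  refine ⟨hA, fun x hx => ?_⟩
  have h0 : (0:ℝ) ∈ Set.Icc (0:ℝ) 1 := by norm_num
  have h1 := hA h0 hx hx.1
  calc (∑' i : ℕ, (x + 1) / ((x + ((i:ℝ) + 1)) ^ 3 * (x + ((i:ℝ) + 1) + 1)))
      ≤ ∑' i : ℕ, ((0:ℝ) + 1) / ((0 + ((i:ℝ) + 1)) ^ 3 * (0 + ((i:ℝ) + 1) + 1)) := h1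
    _ = ∑' i : ℕ, 1 / (((i : ℝ) + 1) ^ 3 * (((i:ℝ) + 1) + 1)) := by
        apply tsum_congr; intro i; norm_num
end

section
/- Define F_n(x) = λ({ξ ∈ [0,1) : τ^n(ξ) ≤ x}), where λ is Lebesgue measure and τ is the Gauss map. Then for all n ≥ 0 and x ∈ [0,1], F_{n+1}(x) = ∑_{i=1}^∞ (F_n(1/i) - F_n(1/(x+i))). -/
open MeasureTheory Set

/-- The Gauss (continued fraction) map. -/
noncomputable def gaussMap (x : ℝ) : ℝ := if x = 0 then 0 else 1 / x - ⌊1 / x⌋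

/-- `F n x` is the Lebesgue measure of the set of `ξ ∈ [0,1)` with `τⁿ ξ ≤ x`. -/
noncomputable def F (n : ℕ) (x : ℝ) : ℝ :=
  (MeasureTheory.volume {ξ ∈ Set.Ico (0:ℝ) 1 | gaussMap^[n] ξ ≤ x}).toReal

lemma gaussMap_eq_fract {x : ℝ} (hx : x ≠ 0) : gaussMap x = Int.fract (1/x) := by
  rw [gaussMap, if_neg hx, Int.fract]

lemma gaussMap_mem (x : ℝ) : gaussMap x ∈ Ico (0:ℝ) 1 := by
  by_cases hx : x = 0
  · simp [gaussMap, hx]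
  · rw [gaussMap_eq_fract hx]
    exact ⟨Int.fract_nonneg _, Int.fract_lt_one _⟩

lemma gaussMap_iterate_mem {x : ℝ} (hx : x ∈ Ico (0:ℝ) 1) (n : ℕ) :
    gaussMap^[n] x ∈ Ico (0:ℝ) 1 := by
  induction n with
  | zero => simpa
  | succ n ih => rw [Function.iterate_succ_apply']; exact gaussMap_mem _

lemma measurable_gaussMap : Measurable gaussMap := by
  have h : Measurable fun x : ℝ => Int.fract (1/x) := by
    have : (fun x : ℝ => Int.fract (1/x)) = fun x : ℝ => Int.fract x⁻¹ := by
      funext x; rw [one_div]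
    rw [this]
    exact measurable_fract.comp measurable_inv
  have h2 : (fun x : ℝ => Int.fract (1/x)) = fun x : ℝ => 1/x - ⌊1/x⌋ := by
    funext x; rw [Int.fract]
  unfold gaussMap
  refine Measurable.ite ?_ measurable_const (h2 ▸ h)
  exact MeasurableSet.congr (measurableSet_singleton (0:ℝ)) (by ext x; simp)

lemma gaussMap_le_iff {x η : ℝ} (hx : x ∈ Icc (0:ℝ) 1) (hη : η ∈ Ico (0:ℝ) 1) :
    gaussMap η ≤ x ↔ η = 0 ∨ ∃ k : ℕ, 1/(x+((k:ℝ)+1)) ≤ η ∧ η ≤ 1/((k:ℝ)+1) := by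
  obtain ⟨hη0, hη1⟩ := hη
  obtain ⟨hx0, hx1⟩ := hx
  constructor
  · intro h
    by_cases h0 : η = 0
    · exact Or.inl h0
    right
    have hηpos : 0 < η := lt_of_le_of_ne hη0 (Ne.symm h0)
    set t := 1/η with ht
    have htpos : 0 < t := by positivity
    have ht1 : 1 < t := by rw [ht, lt_div_iff₀ hηpos]; linarith
    have hfl : (1:ℤ) ≤ ⌊t⌋ := by
      rw [Int.le_floor]; exact_mod_cast ht1.le
    set k : ℕ := (⌊t⌋ - 1).toNat with hk
    have hkc : ((k:ℝ) + 1) = (⌊t⌋ : ℝ) := by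
      have : ((k:ℤ) : ℝ) = ((⌊t⌋ - 1 : ℤ) : ℝ) := by
        congr 1; rw [hk, Int.toNat_of_nonneg (by omega)]
      push_cast at this ⊢
      linarith
    refine ⟨k, ?_, ?_⟩
    · have hfr : t - ⌊t⌋ ≤ x := by
        rw [gaussMap_eq_fract h0, Int.fract] at h; exact h
      have htle : t ≤ x + ((k:ℝ)+1) := by rw [hkc]; linarith
      calc 1/(x+((k:ℝ)+1)) ≤ 1/t := by
            apply one_div_le_one_div_of_le htpos htle
        _ = η := by rw [ht, one_div_one_div]
    · have hle : ((k:ℝ)+1) ≤ t := by rw [hkc]; exact Int.floor_le t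
      have hkpos : (0:ℝ) < (k:ℝ)+1 := by positivity
      calc η = 1/t := by rw [ht, one_div_one_div]
        _ ≤ 1/((k:ℝ)+1) := one_div_le_one_div_of_le hkpos hle
  · rintro (h0 | ⟨k, hlo, hhi⟩)
    · simp [gaussMap, h0]; exact hx0
    have hden : (0:ℝ) < x + ((k:ℝ)+1) := by positivity
    have hηpos : 0 < η := lt_of_lt_of_le (by positivity) hlo
    have h0 : η ≠ 0 := ne_of_gt hηpos
    set t := 1/η with ht
    have htpos : 0 < t := by positivity
    have hkpos : (0:ℝ) < (k:ℝ)+1 := by positivity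
    have htlo : ((k:ℝ)+1) ≤ t := by
      rw [ht, le_div_iff₀ hηpos]
      nlinarith [(le_div_iff₀ hkpos).mp hhi]
    have hthi : t ≤ x + ((k:ℝ)+1) := by
      rw [ht, div_le_iff₀ hηpos]
      nlinarith [(div_le_iff₀ hden).mp hlo]
    have hfl : ((k:ℝ)+1) ≤ (⌊t⌋:ℝ) := by
      have : ((k:ℤ)+1 : ℤ) ≤ ⌊t⌋ := by
        rw [Int.le_floor]; exact_mod_cast htlo
      exact_mod_cast this
    rw [gaussMap_eq_fract h0, Int.fract]
    calc t - ⌊t⌋ ≤ t - (((k:ℝ))+1) := by linarith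
      _ ≤ x := by linarith

lemma countable_gaussMap_fiber (c : ℝ) :
    ({ξ ∈ Ico (0:ℝ) 1 | gaussMap ξ = c}).Countable := by
  have hsub : {ξ ∈ Ico (0:ℝ) 1 | gaussMap ξ = c} ⊆
      insert 0 (Set.range fun k : ℤ => 1/(c + k)) := by
    rintro ξ ⟨hξ, hc⟩
    by_cases h0 : ξ = 0
    · exact Or.inl h0
    right
    rw [gaussMap_eq_fract h0, Int.fract] at hc
    refine ⟨⌊1/ξ⌋, ?_⟩
    have : 1/ξ = c + ⌊1/ξ⌋ := by linarith
    show 1/(c + (⌊1/ξ⌋:ℝ)) = ξ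
    rw [← this, one_div_one_div]
  exact Set.Countable.mono hsub ((Set.countable_range _).insert 0)

lemma countable_iterate_fiber (n : ℕ) (c : ℝ) :
    ({ξ ∈ Ico (0:ℝ) 1 | gaussMap^[n] ξ = c}).Countable := by
  induction n with
  | zero =>
    exact Set.Countable.mono (fun ξ h => h.2) (Set.countable_singleton c)
  | succ n ih =>
    have hsub : {ξ ∈ Ico (0:ℝ) 1 | gaussMap^[n+1] ξ = c} ⊆
        ⋃ η ∈ {η ∈ Ico (0:ℝ) 1 | gaussMap^[n] η = c},
          {ξ ∈ Ico (0:ℝ) 1 | gaussMap ξ = η} := by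
      rintro ξ ⟨hξ, hc⟩
      rw [Function.iterate_succ_apply] at hc
      exact Set.mem_biUnion ⟨gaussMap_mem ξ, hc⟩ ⟨hξ, rfl⟩
    exact Set.Countable.mono hsub (Set.Countable.biUnion ih
      (fun η _ => countable_gaussMap_fiber η))

lemma measurableSet_F (n : ℕ) (y : ℝ) :
    MeasurableSet {ξ ∈ Ico (0:ℝ) 1 | gaussMap^[n] ξ ≤ y} :=
  measurableSet_Ico.inter ((measurable_gaussMap.iterate n) measurableSet_Iic)

lemma volume_F_ne_top (s : Set ℝ) (hs : s ⊆ Ico (0:ℝ) 1) : volume s ≠ ⊤ := by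
  refine ne_top_of_le_ne_top ?_ (measure_mono hs)
  simp [Real.volume_Ico]

theorem gauss_kuzmin_equation :
    ∀ n : ℕ, ∀ x ∈ Set.Icc (0:ℝ) 1,
      F (n + 1) x = ∑' i : ℕ, (F n (1 / (i + 1)) - F n (1 / (x + (i + 1)))) := by
  intro n x hx
  obtain ⟨hx0, hx1⟩ := hx
  set S : ℕ → Set ℝ := fun k =>
    {ξ ∈ Ico (0:ℝ) 1 | gaussMap^[n] ξ ∈ Ioc (1/(x+((k:ℝ)+1))) (1/((k:ℝ)+1))} with hS
  have hden : ∀ k : ℕ, (0:ℝ) < x + ((k:ℝ)+1) := fun k => by positivity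
  have hkpos : ∀ k : ℕ, (0:ℝ) < (k:ℝ)+1 := fun k => by positivity
  have hle : ∀ k : ℕ, 1/(x+((k:ℝ)+1)) ≤ 1/((k:ℝ)+1) := fun k =>
    one_div_le_one_div_of_le (hkpos k) (by linarith)
  have hSmeas : ∀ k, MeasurableSet (S k) := fun k =>
    measurableSet_Ico.inter ((measurable_gaussMap.iterate n) measurableSet_Ioc)
  have hkey0 : ∀ k l : ℕ, k < l → Disjoint (S k) (S l) := by
    intro k l h
    rw [Set.disjoint_left]
    rintro ξ ⟨_, h1, h2⟩ ⟨_, h3, h4⟩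
    have e1 : 1/((l:ℝ)+1) ≤ 1/(x+((k:ℝ)+1)) := by
      apply one_div_le_one_div_of_le (hden k)
      have : (k:ℝ) + 1 ≤ (l:ℝ) := by exact_mod_cast Nat.succ_le_of_lt h
      linarith
    exact absurd (h4.trans e1) (not_le.mpr h1)
  have hSdisj : Pairwise (Function.onFun Disjoint S) := by
    intro k l hkl
    rcases hkl.lt_or_gt with h | h
    · exact hkey0 k l h
    · exact (hkey0 l k h).symm
  -- each piece
  have hkey : ∀ k : ℕ, F n (1/((k:ℝ)+1)) - F n (1/(x+((k:ℝ)+1))) = (volume (S k)).toReal := by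
    intro k
    have hsplit : {ξ ∈ Ico (0:ℝ) 1 | gaussMap^[n] ξ ≤ 1/((k:ℝ)+1)} =
        {ξ ∈ Ico (0:ℝ) 1 | gaussMap^[n] ξ ≤ 1/(x+((k:ℝ)+1))} ∪ S k := by
      ext ξ
      simp only [hS, Set.mem_setOf_eq, Set.mem_union, Set.mem_sep_iff, Set.mem_Ioc]
      constructor
      · rintro ⟨hξ, hle'⟩
        rcases le_or_gt (gaussMap^[n] ξ) (1/(x+((k:ℝ)+1))) with h | h
        · exact Or.inl ⟨hξ, h⟩
        · exact Or.inr ⟨hξ, h, hle'⟩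
      · rintro (⟨hξ, h⟩ | ⟨hξ, _, h⟩)
        · exact ⟨hξ, h.trans (hle k)⟩
        · exact ⟨hξ, h⟩
    have hdisj : Disjoint {ξ ∈ Ico (0:ℝ) 1 | gaussMap^[n] ξ ≤ 1/(x+((k:ℝ)+1))} (S k) := by
      rw [Set.disjoint_left]
      rintro ξ ⟨_, h1⟩ ⟨_, h2, _⟩
      exact absurd (h1.trans_lt h2) (lt_irrefl _)
    have hmeq : volume {ξ ∈ Ico (0:ℝ) 1 | gaussMap^[n] ξ ≤ 1/((k:ℝ)+1)} =
        volume {ξ ∈ Ico (0:ℝ) 1 | gaussMap^[n] ξ ≤ 1/(x+((k:ℝ)+1))} + volume (S k) := by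
      rw [hsplit, measure_union hdisj (hSmeas k)]
    have h1top := volume_F_ne_top _ (fun ξ h => h.1 :
      {ξ ∈ Ico (0:ℝ) 1 | gaussMap^[n] ξ ≤ 1/(x+((k:ℝ)+1))} ⊆ Ico 0 1)
    have h2top := volume_F_ne_top _ (fun ξ h => h.1 : S k ⊆ Ico 0 1)
    rw [F, F, hmeq, ENNReal.toReal_add h1top h2top]
    ring
  -- the null set
  set Z : Set ℝ := {ξ ∈ Ico (0:ℝ) 1 | gaussMap^[n] ξ = 0} ∪
      ⋃ k : ℕ, {ξ ∈ Ico (0:ℝ) 1 | gaussMap^[n] ξ = 1/(x+((k:ℝ)+1))} with hZ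
  have hZ0 : volume Z = 0 := by
    apply Set.Countable.measure_zero
    exact (countable_iterate_fiber n 0).union
      (Set.countable_iUnion fun k => countable_iterate_fiber n _)
  set T : Set ℝ := {ξ ∈ Ico (0:ℝ) 1 | gaussMap^[n+1] ξ ≤ x} with hT
  have hsubT : (⋃ k, S k) ⊆ T := by
    rintro ξ ⟨_, ⟨k, rfl⟩, hξ, h1, h2⟩
    refine ⟨hξ, ?_⟩
    rw [Function.iterate_succ_apply']
    rw [gaussMap_le_iff ⟨hx0, hx1⟩ (gaussMap_iterate_mem hξ n)]
    exact Or.inr ⟨k, h1.le, h2⟩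
  have hTsub : T ⊆ (⋃ k, S k) ∪ Z := by
    rintro ξ ⟨hξ, hτ⟩
    rw [Function.iterate_succ_apply',
      gaussMap_le_iff ⟨hx0, hx1⟩ (gaussMap_iterate_mem hξ n)] at hτ
    rcases hτ with h0 | ⟨k, h1, h2⟩
    · exact Or.inr (Or.inl ⟨hξ, h0⟩)
    rcases eq_or_lt_of_le h1 with heq | hlt
    · exact Or.inr (Or.inr (Set.mem_iUnion.mpr ⟨k, hξ, heq.symm⟩))
    · exact Or.inl (Set.mem_iUnion.mpr ⟨k, hξ, hlt, h2⟩)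
  have hvol : volume T = volume (⋃ k, S k) := by
    refine le_antisymm ?_ (measure_mono hsubT)
    calc volume T ≤ volume ((⋃ k, S k) ∪ Z) := measure_mono hTsub
      _ ≤ volume (⋃ k, S k) + volume Z := measure_union_le _ _
      _ = volume (⋃ k, S k) := by rw [hZ0, add_zero]
  have hsum : volume (⋃ k, S k) = ∑' k, volume (S k) := measure_iUnion hSdisj hSmeas
  have htop : ∀ k, volume (S k) ≠ ⊤ := fun k =>
    volume_F_ne_top _ (fun ξ h => h.1)
  calc F (n+1) x = (volume T).toReal := rfl
    _ = (∑' k, volume (S k)).toReal := by rw [hvol, hsum]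
    _ = ∑' k, (volume (S k)).toReal := ENNReal.tsum_toReal_eq htop
    _ = ∑' i : ℕ, (F n (1 / ((i:ℝ) + 1)) - F n (1 / (x + ((i:ℝ) + 1)))) := by
        exact tsum_congr fun k => (hkey k).symm
end

section
/- If f : [0,1] → ℝ is continuously differentiable and g(x) = ∑_{i=1}^∞ (f(1/i) - f(1/(x+i))), then g is differentiable on [0,1] with g'(x) = ∑_{i=1}^∞ (1/(x+i)^2) f'(1/(x+i)). -/
open Set

private lemma gk_mem_Icc (y : ℝ) (hy : 0 ≤ y) (n : ℕ) :
    1 / (y + (n + 1)) ∈ Set.Icc (0:ℝ) 1 := by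
  have h1 : (1:ℝ) ≤ y + (n + 1) := by
    have : (0:ℝ) ≤ (n:ℝ) := Nat.cast_nonneg n
    linarith
  have h0 : (0:ℝ) < y + (n + 1) := by linarith
  constructor
  · positivity
  · rw [div_le_one h0]; linarith

theorem derivative_of_gauss_kuzmin_series (f : ℝ → ℝ)
    (hf : ContDiffOn ℝ 1 f (Set.Icc 0 1)) :
    ∀ x ∈ Set.Icc (0:ℝ) 1,
      HasDerivWithinAt
        (fun y : ℝ => ∑' i : ℕ, (f (1 / (i + 1)) - f (1 / (y + (i + 1)))))
        (∑' i : ℕ, (1 / (x + (i + 1)) ^ 2) *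
          derivWithin f (Set.Icc 0 1) (1 / (x + (i + 1))))
        (Set.Icc 0 1) x := by
  intro x hx
  have hud : UniqueDiffOn ℝ (Set.Icc (0:ℝ) 1) := uniqueDiffOn_Icc one_pos
  -- continuous extension of the derivative
  set φ : ℝ → ℝ := fun t => derivWithin f (Set.Icc 0 1) (Set.projIcc 0 1 zero_le_one t) with hφdef
  have hd' : ContinuousOn (derivWithin f (Set.Icc 0 1)) (Set.Icc 0 1) :=
    hf.continuousOn_derivWithin hud le_rfl
  have hφcont : Continuous φ := by
    exact (ContinuousOn.restrict hd').comp continuous_projIcc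
  have hφeq : ∀ t ∈ Set.Icc (0:ℝ) 1, φ t = derivWithin f (Set.Icc 0 1) t := by
    intro t ht
    simp [hφdef, Set.projIcc_of_mem zero_le_one ht]
  -- bound on φ
  obtain ⟨C, hC⟩ : ∃ C, ∀ u ∈ Set.Icc (0:ℝ) 1, ‖derivWithin f (Set.Icc 0 1) u‖ ≤ C :=
    isCompact_Icc.exists_bound_of_continuousOn hd'
  have hC0 : 0 ≤ C := le_trans (norm_nonneg _) (hC 0 (by simp))
  have hφbd : ∀ t, ‖φ t‖ ≤ C := fun t => hC _ (Set.projIcc 0 1 zero_le_one t).2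
  -- the C¹ extension F of f
  set F : ℝ → ℝ := fun z => f 0 + ∫ t in (0:ℝ)..z, φ t with hFdef
  have hFderiv : ∀ z : ℝ, HasDerivAt F (φ z) z := by
    intro z
    exact (HasStrictDerivAt.hasDerivAt (hφcont.integral_hasStrictDerivAt 0 z)).const_add (f 0)
  have hFeq : ∀ z ∈ Set.Icc (0:ℝ) 1, F z = f z := by
    intro z hz
    have key : ∫ t in (0:ℝ)..z, φ t = f z - f 0 := by
      apply intervalIntegral.integral_eq_sub_of_hasDeriv_right_of_le hz.1
      · exact (hf.continuousOn).mono (Set.Icc_subset_Icc le_rfl hz.2)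
      · intro t ht
        have ht' : t ∈ Set.Ioo (0:ℝ) 1 := ⟨ht.1, lt_of_lt_of_le ht.2 hz.2⟩
        have hmem : Set.Icc (0:ℝ) 1 ∈ nhds t := Icc_mem_nhds ht'.1 ht'.2
        have hdw : HasDerivWithinAt f (derivWithin f (Set.Icc 0 1) t) (Set.Icc 0 1) t :=
          ((hf.differentiableOn one_ne_zero) t (Set.Ioo_subset_Icc_self ht')).hasDerivWithinAt
        rw [hφeq t (Set.Ioo_subset_Icc_self ht')]
        exact ((hdw.hasDerivAt hmem)).hasDerivWithinAt
      · exact (hφcont.intervalIntegrable 0 z)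
    simp [hFdef, key]
  -- term functions and their derivatives
  set g : ℕ → ℝ → ℝ := fun n y => F (1 / (n + 1)) - F (1 / (y + (n + 1))) with hgdef
  set g' : ℕ → ℝ → ℝ := fun n y => (1 / (y + (n + 1)) ^ 2) * φ (1 / (y + (n + 1))) with hg'def
  have hgderiv : ∀ n : ℕ, ∀ y ∈ Set.Ioi (-(1:ℝ)/2), HasDerivAt (g n) (g' n y) y := by
    intro n y hy
    have hpos : (0:ℝ) < y + (n + 1) := by
      have : (0:ℝ) ≤ (n:ℝ) := Nat.cast_nonneg n
      simp only [Set.mem_Ioi] at hy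
      linarith
    have hinner : HasDerivAt (fun y : ℝ => 1 / (y + (n + 1)))
        (-(1 / (y + (n + 1)) ^ 2)) y := by
      have h1 : HasDerivAt (fun y : ℝ => y + ((n:ℝ) + 1)) 1 y :=
        (hasDerivAt_id y).add_const _
      have := h1.inv hpos.ne'
      simpa [one_div, div_eq_mul_inv, Pi.inv_def] using this
    have hcomp := (hFderiv (1 / (y + (n + 1)))).comp y hinner
    have hsub := (hasDerivAt_const y (F (1 / ((n:ℝ) + 1)))).sub hcomp
    have h2 : g' n y = 0 - φ (1 / (y + ((n:ℝ) + 1))) * -(1 / (y + ((n:ℝ) + 1)) ^ 2) := by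
      simp only [hg'def]; ring
    rw [h2]
    exact hsub
  -- summable bound
  set u : ℕ → ℝ := fun n => C * 4 / (n + 1) ^ 2 with hudef
  have husum : Summable u := by
    have h1 : Summable (fun n : ℕ => 1 / ((n:ℝ) + 1) ^ 2) := by
      have := (summable_nat_add_iff 1).2 (Real.summable_one_div_nat_pow.2 (by norm_num : 1 < 2))
      apply this.congr
      intro n
      push_cast
      ring
    exact (h1.mul_left (C * 4)).congr fun n => by rw [hudef]; ring
  have hbound : ∀ n : ℕ, ∀ y ∈ Set.Ioi (-(1:ℝ)/2), ‖g' n y‖ ≤ u n := by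
    intro n y hy
    simp only [Set.mem_Ioi] at hy
    have hn0 : (0:ℝ) ≤ (n:ℝ) := Nat.cast_nonneg n
    have h2 : ((n:ℝ) + 1) / 2 ≤ y + (n + 1) := by linarith
    have hp2 : (0:ℝ) < ((n:ℝ) + 1) / 2 := by positivity
    have hsq : (((n:ℝ) + 1) / 2) ^ 2 ≤ (y + (n + 1)) ^ 2 := by
      apply pow_le_pow_left₀ hp2.le h2
    have h3 : 1 / (y + (n + 1)) ^ 2 ≤ 4 / ((n:ℝ) + 1) ^ 2 := by
      have hpos : (0:ℝ) < y + (n + 1) := by linarith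
      rw [div_le_div_iff₀ (pow_pos hpos 2) (by positivity)]
      nlinarith
    have h4 : (0:ℝ) ≤ 1 / (y + (n + 1)) ^ 2 := by positivity
    calc ‖g' n y‖ = (1 / (y + (n + 1)) ^ 2) * ‖φ (1 / (y + (n + 1)))‖ := by
          simp [hg'def, abs_mul, abs_of_nonneg h4]
      _ ≤ (4 / ((n:ℝ) + 1) ^ 2) * C := by
          apply mul_le_mul h3 (hφbd _) (norm_nonneg _) (by positivity)
      _ = u n := by rw [hudef]; ring
  -- convergence at 0
  have hg0 : Summable (fun n => g n 0) := by
    apply summable_of_ne_finset_zero (s := ∅)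
    intro n _
    simp [hgdef]
  -- main application
  have hmain : HasDerivAt (fun z => ∑' n, g n z) (∑' n, g' n x) x :=
    hasDerivAt_tsum_of_isPreconnected husum isOpen_Ioi (isPreconnected_Ioi)
      hgderiv hbound (by norm_num : (0:ℝ) ∈ Set.Ioi (-(1:ℝ)/2)) hg0
      (by simp only [Set.mem_Ioi]; linarith [hx.1])
  have hsum_eq : (∑' n, g' n x) = ∑' i : ℕ, (1 / (x + (i + 1)) ^ 2) *
      derivWithin f (Set.Icc 0 1) (1 / (x + (i + 1))) := by
    apply tsum_congr
    intro n
    simp only [hg'def]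
    rw [hφeq _ (gk_mem_Icc x hx.1 n)]
  rw [← hsum_eq]
  apply (hmain.hasDerivWithinAt).congr
  · intro y hy
    apply tsum_congr
    intro n
    simp only [hgdef]
    rw [hFeq _ (by simpa using gk_mem_Icc 0 le_rfl n), hFeq _ (gk_mem_Icc y hy.1 n)]
  · apply tsum_congr
    intro n
    simp only [hgdef]
    rw [hFeq _ (by simpa using gk_mem_Icc 0 le_rfl n), hFeq _ (gk_mem_Icc x hx.1 n)]
end

section
/- Let g : [0,1] → ℝ be continuously differentiable and define (Ug)(x) = ∑_{i=1}^∞ P_i(x) g(1/(x+i)) with P_i(x) = (x+1)/((x+i)(x+i+1)). Then Ug is differentiable and for all x ∈ [0,1], (Ug)'(x) = -∑_{i=1}^∞ (i/(x+i+1)^2)(g(1/(x+i)) - g(1/(x+i+1))) - ∑_{i=1}^∞ (P_i(x)/(x+i)^2) g'(1/(x+i)). -/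
open Filter Topology

lemma tsum_hasDerivWithinAt_aux {f f' : ℕ → ℝ → ℝ} {u : ℕ → ℝ} {s : Set ℝ}
    (hs : Convex ℝ s) (hu : Summable u)
    (hf : ∀ n, ∀ y ∈ s, HasDerivWithinAt (f n) (f' n y) s y)
    (hb : ∀ n, ∀ y ∈ s, |f' n y| ≤ u n)
    (hsum : ∀ y ∈ s, Summable (fun n => f n y))
    {x : ℝ} (hx : x ∈ s) :
    HasDerivWithinAt (fun y => ∑' n, f n y) (∑' n, f' n x) s x := by
  have hD : Summable (fun n => f' n x) :=
    Summable.of_norm_bounded hu (fun n => by simpa using hb n x hx)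
  rw [hasDerivWithinAt_iff_isLittleO, Asymptotics.isLittleO_iff]
  intro ε hε
  have htail : Tendsto (fun N => ∑' n, u (n + N)) atTop (𝓝 0) := tendsto_sum_nat_add u
  obtain ⟨N, hN⟩ : ∃ N, ∑' n, u (n + N) < ε / 3 := by
    have := (htail.eventually (eventually_lt_nhds (by linarith : (0:ℝ) < ε/3))).exists
    simpa using this
  set T := ∑' n, u (n + N) with hT
  have hT0 : 0 ≤ T := tsum_nonneg (fun n => le_trans (abs_nonneg _) (hb _ x hx))
  have huN : Summable (fun n => u (n + N)) := (summable_nat_add_iff N).2 hu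
  have tailLip : ∀ y ∈ s, |(∑' n, f (n + N) y) - ∑' n, f (n + N) x| ≤ T * |y - x| := by
    intro y hy
    have hsy : Summable fun n => f (n + N) y := (summable_nat_add_iff N).2 (hsum y hy)
    have hsx : Summable fun n => f (n + N) x := (summable_nat_add_iff N).2 (hsum x hx)
    rw [← Summable.tsum_sub hsy hsx]
    have hper : ∀ n, ‖f (n + N) y - f (n + N) x‖ ≤ u (n + N) * |y - x| := by
      intro n
      have := hs.norm_image_sub_le_of_norm_hasDerivWithin_le
        (f := f (n + N)) (f' := fun z => f' (n + N) z)
        (fun z hz => hf _ z hz) (fun z hz => by simpa using hb _ z hz) hx hy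
      simpa using this
    have := tsum_of_norm_bounded (f := fun n => f (n + N) y - f (n + N) x)
      (g := fun n => u (n + N) * |y - x|) ((huN.hasSum).mul_right _) hper
    simpa using this
  have hDtail : |∑' n, f' (n + N) x| ≤ T := by
    have := tsum_of_norm_bounded (f := fun n => f' (n + N) x)
      (g := fun n => u (n + N)) huN.hasSum (fun n => by simpa using hb _ x hx)
    simpa using this
  have hfin : HasDerivWithinAt (fun y => ∑ n ∈ Finset.range N, f n y)
      (∑ n ∈ Finset.range N, f' n x) s x :=
    HasDerivWithinAt.fun_sum (fun n _ => hf n x hx)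
  have hfin' := (hasDerivWithinAt_iff_isLittleO.1 hfin).def (by linarith : (0:ℝ) < ε/3)
  filter_upwards [hfin', self_mem_nhdsWithin] with y h1 hy
  have hsplity := (Summable.sum_add_tsum_nat_add N (hsum y hy)).symm
  have hsplitx := (Summable.sum_add_tsum_nat_add N (hsum x hx)).symm
  have hsplitD := (Summable.sum_add_tsum_nat_add N hD).symm
  simp only [smul_eq_mul] at h1 ⊢
  have key : (∑' n, f n y) - (∑' n, f n x) - (y - x) * ∑' n, f' n x
      = ((∑ n ∈ Finset.range N, f n y) - (∑ n ∈ Finset.range N, f n x)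
          - (y - x) * ∑ n ∈ Finset.range N, f' n x)
        + ((∑' n, f (n + N) y) - ∑' n, f (n + N) x)
        - (y - x) * ∑' n, f' (n + N) x := by
    rw [hsplity, hsplitx, hsplitD]; ring
  rw [key]
  have e2 := tailLip y hy
  have e3 : |(y - x) * ∑' n, f' (n + N) x| ≤ |y - x| * T := by
    rw [abs_mul]
    exact mul_le_mul_of_nonneg_left hDtail (abs_nonneg _)
  calc |_ + ((∑' n, f (n + N) y) - ∑' n, f (n + N) x) - (y - x) * ∑' n, f' (n + N) x|
      ≤ |(∑ n ∈ Finset.range N, f n y) - (∑ n ∈ Finset.range N, f n x)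
          - (y - x) * ∑ n ∈ Finset.range N, f' n x|
        + |(∑' n, f (n + N) y) - ∑' n, f (n + N) x|
        + |(y - x) * ∑' n, f' (n + N) x| := by
        exact (abs_sub _ _).trans (by gcongr; exact abs_add_le _ _)
    _ ≤ ε/3 * ‖y - x‖ + T * |y - x| + |y - x| * T := by
        gcongr
        · simpa using h1
    _ ≤ ε * ‖y - x‖ := by
        have : (0:ℝ) ≤ |y - x| := abs_nonneg _
        simp only [Real.norm_eq_abs]
        nlinarith [hN, hT0]

lemma key_bound (n : ℕ) {y : ℝ} (hy0 : 0 ≤ y) (hy1 : y ≤ 1) :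
    |(n:ℝ)/(y+(n:ℝ)+1)^2 - ((n:ℝ)+1)/(y+(n:ℝ)+2)^2| ≤ 1/((n:ℝ)+1)^2 := by
  have hn : (0:ℝ) ≤ n := Nat.cast_nonneg n
  have ha : (0:ℝ) < y+(n:ℝ)+1 := by linarith
  have hb : (0:ℝ) < y+(n:ℝ)+2 := by linarith
  have ha' : ((n:ℝ)+1) ≤ y+(n:ℝ)+1 := by linarith
  have hb' : ((n:ℝ)+2) ≤ y+(n:ℝ)+2 := by linarith
  have hrw : (n:ℝ)/(y+(n:ℝ)+1)^2 - ((n:ℝ)+1)/(y+(n:ℝ)+2)^2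
      = ((n:ℝ)^2+(n:ℝ)-1-y^2-2*y)/((y+(n:ℝ)+1)^2*(y+(n:ℝ)+2)^2) := by
    field_simp
    ring
  rw [hrw, abs_div, abs_of_pos (show (0:ℝ) < (y+(n:ℝ)+1)^2*(y+(n:ℝ)+2)^2 by positivity)]
  have hnum : |(n:ℝ)^2+(n:ℝ)-1-y^2-2*y| ≤ ((n:ℝ)+2)^2 := by
    rw [abs_le]
    constructor <;> nlinarith
  calc |(n:ℝ)^2+(n:ℝ)-1-y^2-2*y| / ((y+(n:ℝ)+1)^2*(y+(n:ℝ)+2)^2)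
      ≤ ((n:ℝ)+2)^2 / (((n:ℝ)+1)^2*((n:ℝ)+2)^2) := by
        apply div_le_div₀ (by positivity) hnum (by positivity)
        have := mul_le_mul (pow_le_pow_left₀ (by positivity) ha' 2)
          (pow_le_pow_left₀ (by positivity) hb' 2) (by positivity) (by positivity)
        linarith
    _ = 1/((n:ℝ)+1)^2 := by
        field_simp

set_option maxHeartbeats 2000000 in
theorem deriv_perron_frobenius (g : ℝ → ℝ)
    (hg : ContDiffOn ℝ 1 g (Set.Icc 0 1)) :
    ∀ x ∈ Set.Icc (0:ℝ) 1,
      HasDerivWithinAt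
        (fun y : ℝ => ∑' i : ℕ,
          (y + 1) / ((y + (i + 1)) * (y + (i + 1) + 1)) * g (1 / (y + (i + 1))))
        (-(∑' i : ℕ, ((i : ℝ) + 1) / (x + (i + 1) + 1) ^ 2 *
            (g (1 / (x + (i + 1))) - g (1 / (x + (i + 1) + 1))))
         - ∑' i : ℕ, ((x + 1) / ((x + (i + 1)) * (x + (i + 1) + 1)) / (x + (i + 1)) ^ 2) *
            derivWithin g (Set.Icc 0 1) (1 / (x + (i + 1))))
        (Set.Icc 0 1) x := by
  intro x hx
  obtain ⟨hx0, hx1⟩ := hx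
  have hconv : Convex ℝ (Set.Icc (0:ℝ) 1) := convex_Icc 0 1
  have huniq : UniqueDiffOn ℝ (Set.Icc (0:ℝ) 1) := uniqueDiffOn_Icc (by norm_num)
  set gd : ℝ → ℝ := derivWithin g (Set.Icc 0 1) with hgd_def
  have hgdiff : ∀ z ∈ Set.Icc (0:ℝ) 1, HasDerivWithinAt g (gd z) (Set.Icc 0 1) z :=
    fun z hz => ((hg.differentiableOn one_ne_zero) z hz).hasDerivWithinAt
  have hgc : ContinuousOn g (Set.Icc (0:ℝ) 1) := hg.continuousOn
  have hgdc : ContinuousOn gd (Set.Icc (0:ℝ) 1) :=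
    hg.continuousOn_derivWithin huniq le_rfl
  obtain ⟨M, hM⟩ := isCompact_Icc.exists_bound_of_continuousOn hgc
  obtain ⟨M', hM'⟩ := isCompact_Icc.exists_bound_of_continuousOn hgdc
  have h0mem : (0:ℝ) ∈ Set.Icc (0:ℝ) 1 := Set.left_mem_Icc.2 (by norm_num)
  have hM0 : 0 ≤ M := le_trans (norm_nonneg _) (hM 0 h0mem)
  have hM'0 : 0 ≤ M' := le_trans (norm_nonneg _) (hM' 0 h0mem)
  -- membership of the point 1/(y+n+1)
  have hqmem : ∀ (n : ℕ) (y : ℝ), y ∈ Set.Icc (0:ℝ) 1 → 1/(y+((n:ℝ)+1)) ∈ Set.Icc (0:ℝ) 1 := by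
    intro n y hy
    obtain ⟨h0, h1⟩ := hy
    have hn : (0:ℝ) ≤ n := Nat.cast_nonneg n
    have hpos : (0:ℝ) < y + ((n:ℝ)+1) := by linarith
    constructor
    · positivity
    · rw [div_le_one hpos]; linarith
  -- the summands and their derivatives
  set f : ℕ → ℝ → ℝ := fun n y =>
    (y + 1) / ((y + ((n:ℝ) + 1)) * (y + ((n:ℝ) + 1) + 1)) * g (1 / (y + ((n:ℝ) + 1))) with hf_def
  set f' : ℕ → ℝ → ℝ := fun n y =>
    ((n:ℝ)/(y+((n:ℝ)+1))^2 - ((n:ℝ)+1)/(y+((n:ℝ)+1)+1)^2) * g (1/(y+((n:ℝ)+1)))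
    - ((y+1)/((y+((n:ℝ)+1))*(y+((n:ℝ)+1)+1))/(y+((n:ℝ)+1))^2) * gd (1/(y+((n:ℝ)+1))) with hf'_def
  have hderiv : ∀ n, ∀ y ∈ Set.Icc (0:ℝ) 1, HasDerivWithinAt (f n) (f' n y) (Set.Icc 0 1) y := by
    intro n y hy
    obtain ⟨hy0, hy1⟩ := hy
    have hn : (0:ℝ) ≤ n := Nat.cast_nonneg n
    have hc0 : (0:ℝ) < y + ((n:ℝ)+1) := by linarith
    have hc1 : (0:ℝ) < y + ((n:ℝ)+1) + 1 := by linarith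
    have hq : HasDerivAt (fun z : ℝ => 1/(z+((n:ℝ)+1))) (-(1/(y+((n:ℝ)+1))^2)) y := by
      have h := ((hasDerivAt_id y).add_const ((n:ℝ)+1)).fun_inv (ne_of_gt hc0)
      simpa [one_div, neg_div] using h
    have hgq : HasDerivWithinAt (fun z => g (1/(z+((n:ℝ)+1))))
        (gd (1/(y+((n:ℝ)+1))) * (-(1/(y+((n:ℝ)+1))^2))) (Set.Icc 0 1) y := by
      have houter : HasDerivWithinAt g (gd (1/(y+((n:ℝ)+1)))) (Set.Icc 0 1) (1/(y+((n:ℝ)+1))) :=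
        hgdiff _ (hqmem n y ⟨hy0, hy1⟩)
      have := HasDerivWithinAt.comp y houter hq.hasDerivWithinAt
        (fun z hz => hqmem n z hz)
      simpa [Function.comp_def] using this
    have hP : HasDerivWithinAt (fun z => (z+1)/((z+((n:ℝ)+1))*(z+((n:ℝ)+1)+1)))
        ((n:ℝ)/(y+((n:ℝ)+1))^2 - ((n:ℝ)+1)/(y+((n:ℝ)+1)+1)^2) (Set.Icc 0 1) y := by
      have hnum : HasDerivAt (fun z : ℝ => z + 1) 1 y := (hasDerivAt_id y).add_const 1
      have hden : HasDerivAt (fun z : ℝ => (z+((n:ℝ)+1))*(z+((n:ℝ)+1)+1))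
          (1*(y+((n:ℝ)+1)+1) + (y+((n:ℝ)+1))*1) y := by
        have h1 : HasDerivAt (fun z : ℝ => z+((n:ℝ)+1)) 1 y := (hasDerivAt_id y).add_const _
        have h2 : HasDerivAt (fun z : ℝ => z+((n:ℝ)+1)+1) 1 y := by
          simpa using ((hasDerivAt_id y).add_const ((n:ℝ)+1)).add_const 1
        exact h1.mul h2
      have hdiv := hnum.fun_div hden (ne_of_gt (mul_pos hc0 hc1))
      have := hdiv.hasDerivWithinAt (s := Set.Icc 0 1)
      convert this using 1
      case e'_4 => rfl
      case e'_5 => rfl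
      field_simp
      ring
    have hmul := hP.fun_mul hgq
    convert hmul using 1
    case e'_4 => rfl
    case e'_5 => rfl
    ring
  -- bounds
  have hbound : ∀ n, ∀ y ∈ Set.Icc (0:ℝ) 1, |f' n y| ≤ (M + 2*M') * (1/((n:ℝ)+1)^2) := by
    intro n y hy
    obtain ⟨hy0, hy1⟩ := hy
    have hn : (0:ℝ) ≤ n := Nat.cast_nonneg n
    have hc0 : (0:ℝ) < y + ((n:ℝ)+1) := by linarith
    have hc1 : (0:ℝ) < y + ((n:ℝ)+1) + 1 := by linarith
    have hA : |(n:ℝ)/(y+((n:ℝ)+1))^2 - ((n:ℝ)+1)/(y+((n:ℝ)+1)+1)^2| ≤ 1/((n:ℝ)+1)^2 := by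
      have e1 : y+((n:ℝ)+1) = y+(n:ℝ)+1 := by ring
      have e2 : y+((n:ℝ)+1)+1 = y+(n:ℝ)+2 := by ring
      rw [e2, e1]
      exact key_bound n hy0 hy1
    have hgb : |g (1/(y+((n:ℝ)+1)))| ≤ M := by
      simpa using hM _ (hqmem n y ⟨hy0, hy1⟩)
    have hgdb : |gd (1/(y+((n:ℝ)+1)))| ≤ M' := by
      simpa using hM' _ (hqmem n y ⟨hy0, hy1⟩)
    have hW : |(y+1)/((y+((n:ℝ)+1))*(y+((n:ℝ)+1)+1))/(y+((n:ℝ)+1))^2| ≤ 2/((n:ℝ)+1)^2 := by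
      rw [div_div, abs_of_nonneg (by positivity)]
      apply div_le_div₀ (by norm_num) (by linarith) (by positivity)
      have h1 : ((n:ℝ)+1) ≤ y+((n:ℝ)+1) := by linarith
      have h2 : ((n:ℝ)+1)^2 ≤ (y+((n:ℝ)+1))^2 := by nlinarith
      have h3 : (1:ℝ) ≤ (y+((n:ℝ)+1))*(y+((n:ℝ)+1)+1) := by nlinarith
      nlinarith
    calc |f' n y| ≤ |((n:ℝ)/(y+((n:ℝ)+1))^2 - ((n:ℝ)+1)/(y+((n:ℝ)+1)+1)^2) * g (1/(y+((n:ℝ)+1)))|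
          + |((y+1)/((y+((n:ℝ)+1))*(y+((n:ℝ)+1)+1))/(y+((n:ℝ)+1))^2) * gd (1/(y+((n:ℝ)+1)))| :=
        abs_sub _ _
      _ ≤ (1/((n:ℝ)+1)^2) * M + (2/((n:ℝ)+1)^2) * M' := by
          rw [abs_mul, abs_mul]
          gcongr <;> first | exact abs_nonneg _ | assumption
      _ = (M + 2*M') * (1/((n:ℝ)+1)^2) := by ring
  have hsq : Summable (fun n : ℕ => 1/((n:ℝ)+1)^2) := by
    have h1 : Summable (fun n : ℕ => 1/((n:ℝ))^2) :=
      Real.summable_one_div_nat_pow.mpr (by norm_num)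
    have h2 := (summable_nat_add_iff 1).2 h1
    exact h2.congr (fun n => by push_cast; ring)
  have hu : Summable (fun n : ℕ => (M + 2*M') * (1/((n:ℝ)+1)^2)) := hsq.mul_left _
  have hsum : ∀ y ∈ Set.Icc (0:ℝ) 1, Summable (fun n => f n y) := by
    intro y hy
    obtain ⟨hy0, hy1⟩ := hy
    apply Summable.of_norm_bounded (g := fun n : ℕ => (2*M) * (1/((n:ℝ)+1)^2)) (hsq.mul_left _)
    intro n
    have hn : (0:ℝ) ≤ n := Nat.cast_nonneg n
    have hc0 : (0:ℝ) < y + ((n:ℝ)+1) := by linarith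
    have hc1 : (0:ℝ) < y + ((n:ℝ)+1) + 1 := by linarith
    have hgb : |g (1/(y+((n:ℝ)+1)))| ≤ M := by
      simpa using hM _ (hqmem n y ⟨hy0, hy1⟩)
    have hPb : |(y+1)/((y+((n:ℝ)+1))*(y+((n:ℝ)+1)+1))| ≤ 2/((n:ℝ)+1)^2 := by
      rw [abs_of_nonneg (by positivity)]
      apply div_le_div₀ (by norm_num) (by linarith) (by positivity)
      nlinarith
    calc ‖f n y‖ = |(y+1)/((y+((n:ℝ)+1))*(y+((n:ℝ)+1)+1))| * |g (1/(y+((n:ℝ)+1)))| := by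
          simp only [hf_def, Real.norm_eq_abs, abs_mul]
      _ ≤ (2/((n:ℝ)+1)^2) * M := by
          gcongr <;> first | exact abs_nonneg _ | assumption
      _ = (2*M) * (1/((n:ℝ)+1)^2) := by ring
  have main := tsum_hasDerivWithinAt_aux hconv hu hderiv hbound hsum ⟨hx0, hx1⟩
  convert main using 1
  -- now prove the derivative formula identity
  set L : ℕ → ℝ := fun n =>
    ((n:ℝ)/(x+((n:ℝ)+1))^2 - ((n:ℝ)+1)/(x+((n:ℝ)+1)+1)^2) * g (1/(x+((n:ℝ)+1))) with hL_def
  set W : ℕ → ℝ := fun n =>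
    ((x+1)/((x+((n:ℝ)+1))*(x+((n:ℝ)+1)+1))/(x+((n:ℝ)+1))^2) * gd (1/(x+((n:ℝ)+1))) with hW_def
  set R : ℕ → ℝ := fun n =>
    ((n:ℝ)+1)/(x+((n:ℝ)+1)+1)^2 * (g (1/(x+((n:ℝ)+1))) - g (1/(x+((n:ℝ)+1)+1))) with hR_def
  set b : ℕ → ℝ := fun n => (n:ℝ)/(x+(n:ℝ)+1)^2 * g (1/(x+(n:ℝ)+1)) with hb_def
  have hxc : ∀ n : ℕ, (0:ℝ) < x + ((n:ℝ)+1) := fun n => by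
    have : (0:ℝ) ≤ n := Nat.cast_nonneg n; linarith
  have hxc1 : ∀ n : ℕ, (0:ℝ) < x + ((n:ℝ)+1) + 1 := fun n => by
    have := hxc n; linarith
  have hq2mem : ∀ n : ℕ, 1/(x+((n:ℝ)+1)+1) ∈ Set.Icc (0:ℝ) 1 := by
    intro n
    have h1 := hxc1 n
    constructor
    · positivity
    · rw [div_le_one h1]
      have : (0:ℝ) ≤ n := Nat.cast_nonneg n
      linarith
  have hLsum : Summable L := by
    apply Summable.of_norm_bounded (g := fun n : ℕ => M * (1/((n:ℝ)+1)^2)) (hsq.mul_left _)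
    intro n
    have hA : |(n:ℝ)/(x+((n:ℝ)+1))^2 - ((n:ℝ)+1)/(x+((n:ℝ)+1)+1)^2| ≤ 1/((n:ℝ)+1)^2 := by
      have e2 : x+((n:ℝ)+1)+1 = x+(n:ℝ)+2 := by ring
      have e1 : x+((n:ℝ)+1) = x+(n:ℝ)+1 := by ring
      rw [e2, e1]
      exact key_bound n hx0 hx1
    have hgb : |g (1/(x+((n:ℝ)+1)))| ≤ M := by
      simpa using hM _ (hqmem n x ⟨hx0, hx1⟩)
    calc ‖L n‖ = |(n:ℝ)/(x+((n:ℝ)+1))^2 - ((n:ℝ)+1)/(x+((n:ℝ)+1)+1)^2|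
          * |g (1/(x+((n:ℝ)+1)))| := by
          simp only [hL_def, Real.norm_eq_abs, abs_mul]
      _ ≤ (1/((n:ℝ)+1)^2) * M := by
          gcongr <;> first | exact abs_nonneg _ | assumption
      _ = M * (1/((n:ℝ)+1)^2) := by ring
  have hWsum : Summable W := by
    apply Summable.of_norm_bounded (g := fun n : ℕ => (2*M') * (1/((n:ℝ)+1)^2)) (hsq.mul_left _)
    intro n
    have hn : (0:ℝ) ≤ n := Nat.cast_nonneg n
    have hc0 := hxc n
    have hc1 := hxc1 n
    have hgdb : |gd (1/(x+((n:ℝ)+1)))| ≤ M' := by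
      simpa using hM' _ (hqmem n x ⟨hx0, hx1⟩)
    have hW : |(x+1)/((x+((n:ℝ)+1))*(x+((n:ℝ)+1)+1))/(x+((n:ℝ)+1))^2| ≤ 2/((n:ℝ)+1)^2 := by
      rw [div_div, abs_of_nonneg (by positivity)]
      apply div_le_div₀ (by norm_num) (by linarith) (by positivity)
      have h1 : ((n:ℝ)+1) ≤ x+((n:ℝ)+1) := by linarith
      have h2 : ((n:ℝ)+1)^2 ≤ (x+((n:ℝ)+1))^2 := by nlinarith
      have h3 : (1:ℝ) ≤ (x+((n:ℝ)+1))*(x+((n:ℝ)+1)+1) := by nlinarith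
      nlinarith
    calc ‖W n‖ = |(x+1)/((x+((n:ℝ)+1))*(x+((n:ℝ)+1)+1))/(x+((n:ℝ)+1))^2|
          * |gd (1/(x+((n:ℝ)+1)))| := by
          simp only [hW_def, Real.norm_eq_abs, abs_mul]
      _ ≤ (2/((n:ℝ)+1)^2) * M' := by
          gcongr <;> first | exact abs_nonneg _ | assumption
      _ = (2*M') * (1/((n:ℝ)+1)^2) := by ring
  have hRsum : Summable R := by
    apply Summable.of_norm_bounded (g := fun n : ℕ => M' * (1/((n:ℝ)+1)^2)) (hsq.mul_left _)
    intro n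
    have hn : (0:ℝ) ≤ n := Nat.cast_nonneg n
    have hc0 := hxc n
    have hc1 := hxc1 n
    have hlip := hconv.norm_image_sub_le_of_norm_hasDerivWithin_le hgdiff
      (fun z hz => hM' z hz) (hq2mem n) (hqmem n x ⟨hx0, hx1⟩)
    have hdiffq : |1/(x+((n:ℝ)+1)) - 1/(x+((n:ℝ)+1)+1)| ≤ 1/((n:ℝ)+1)^2 := by
      have e : 1/(x+((n:ℝ)+1)) - 1/(x+((n:ℝ)+1)+1)
          = 1/((x+((n:ℝ)+1))*(x+((n:ℝ)+1)+1)) := by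
        rw [div_sub_div _ _ (ne_of_gt hc0) (ne_of_gt hc1)]
        ring_nf
      rw [e, abs_of_nonneg (by positivity)]
      apply div_le_div₀ (by norm_num) le_rfl (by positivity)
      nlinarith
    have hgdiffb : |g (1/(x+((n:ℝ)+1))) - g (1/(x+((n:ℝ)+1)+1))| ≤ M' * (1/((n:ℝ)+1)^2) := by
      have := hlip.trans (mul_le_mul_of_nonneg_left (by simpa using hdiffq) hM'0)
      simpa using this
    have hpref : |((n:ℝ)+1)/(x+((n:ℝ)+1)+1)^2| ≤ 1 := by
      rw [abs_of_nonneg (by positivity), div_le_one (by positivity)]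
      nlinarith
    calc ‖R n‖ = |((n:ℝ)+1)/(x+((n:ℝ)+1)+1)^2|
          * |g (1/(x+((n:ℝ)+1))) - g (1/(x+((n:ℝ)+1)+1))| := by
          simp only [hR_def, Real.norm_eq_abs, abs_mul]
      _ ≤ 1 * (M' * (1/((n:ℝ)+1)^2)) := by
          apply mul_le_mul hpref hgdiffb (abs_nonneg _) (by norm_num)
      _ = M' * (1/((n:ℝ)+1)^2) := by ring
  have hc : ∀ n : ℕ, L n + R n = b n - b (n+1) := by
    intro n
    simp only [hL_def, hR_def, hb_def]
    push_cast
    have e1 : x + ((n:ℝ)+1) = x + (n:ℝ) + 1 := by ring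
    have e2 : x + ((n:ℝ)+1) + 1 = x + ((n:ℝ)+1) + 1 := rfl
    rw [e1]
    ring_nf
  have hb0 : b 0 = 0 := by simp [hb_def]
  have hbtend : Tendsto b atTop (𝓝 0) := by
    apply squeeze_zero_norm (a := fun n : ℕ => M * (1/((n:ℝ)+1)))
    · intro n
      have hn : (0:ℝ) ≤ n := Nat.cast_nonneg n
      have hc0 : (0:ℝ) < x + (n:ℝ) + 1 := by linarith
      have hgb : |g (1/(x+(n:ℝ)+1))| ≤ M := by
        have := hqmem n x ⟨hx0, hx1⟩
        have e1 : x + ((n:ℝ)+1) = x + (n:ℝ) + 1 := by ring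
        rw [e1] at this
        simpa using hM _ this
      have hfac : |(n:ℝ)/(x+(n:ℝ)+1)^2| ≤ 1/((n:ℝ)+1) := by
        rw [abs_of_nonneg (by positivity), div_le_div_iff₀ (by positivity) (by positivity)]
        nlinarith
      calc ‖b n‖ = |(n:ℝ)/(x+(n:ℝ)+1)^2| * |g (1/(x+(n:ℝ)+1))| := by
            simp only [hb_def, Real.norm_eq_abs, abs_mul]
        _ ≤ (1/((n:ℝ)+1)) * M := by
            gcongr <;> first | exact abs_nonneg _ | assumption
        _ = M * (1/((n:ℝ)+1)) := by ring
    · have h := tendsto_const_div_atTop_nhds_zero_nat M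
      have h2 := h.comp (tendsto_add_atTop_nat 1)
      exact h2.congr (fun n => by simp only [Function.comp]; push_cast; ring)
  have hcsum : Summable (fun n => b n - b (n+1)) := (hLsum.add hRsum).congr hc
  have htel : ∑' n, (b n - b (n+1)) = 0 := by
    have h1 := hcsum.hasSum.tendsto_sum_nat
    have h2 : (fun N => ∑ n ∈ Finset.range N, (b n - b (n+1))) = fun N => b 0 - b N := by
      funext N; exact Finset.sum_range_sub' b N
    rw [h2] at h1
    have h3 : Tendsto (fun N => b 0 - b N) atTop (𝓝 (b 0 - 0)) := tendsto_const_nhds.sub hbtend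
    have h4 := tendsto_nhds_unique h1 h3
    rw [h4, hb0, sub_zero]
  have hLR : ∑' n, L n = -∑' n, R n := by
    have h1 : ∀ n, ((fun n => b n - b (n+1)) n - R n) = L n := fun n => by
      have := hc n; simp only; linarith
    calc ∑' n, L n = ∑' n, ((fun n => b n - b (n+1)) n - R n) := (tsum_congr h1).symm
      _ = (∑' n, (b n - b (n+1))) - ∑' n, R n := Summable.tsum_sub hcsum hRsum
      _ = -∑' n, R n := by rw [htel]; ring
  calc -(∑' n, R n) - ∑' n, W n = (∑' n, L n) - ∑' n, W n := by rw [hLR]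
    _ = ∑' n, (L n - W n) := (Summable.tsum_sub hLsum hWsum).symm
    _ = ∑' n, f' n x := tsum_congr (fun n => rfl)
end

section
/- Let g : [0,1] → ℝ be continuously differentiable with M = max_{x∈[0,1]} |g'(x)|, and let Ug(x) = ∑_{i=1}^∞ P_i(x) g(1/(x+i)) with P_i(x) = (x+1)/((x+i)(x+i+1)). Then max_{x∈[0,1]} |(Ug)'(x)| ≤ (2ζ(3) - ζ(2)) · M. -/
set_option maxHeartbeats 4000000

/-- The Riemann zeta function at a natural argument, as a real series. -/
noncomputable def zetaR (s : ℕ) : ℝ := ∑' n : ℕ, 1 / ((n : ℝ) + 1) ^ s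

section Aux

lemma summable_pow_aux (p : ℕ) (hp : 1 < p) : Summable (fun n : ℕ => 1 / ((n:ℝ) + 1) ^ p) := by
  have h := (Real.summable_one_div_nat_pow (p := p)).2 hp
  have h2 := (summable_nat_add_iff 1).2 h
  simpa using h2

lemma summable_cube : Summable (fun n : ℕ => 1 / ((n:ℝ) + 2) ^ 3) := by
  have h := (summable_nat_add_iff 1).2 (summable_pow_aux 3 (by norm_num))
  refine h.congr fun n => ?_
  push_cast; ring

lemma summable_mix : Summable (fun n : ℕ => 1 / (((n:ℝ) + 1) ^ 3 * ((n:ℝ) + 2))) := by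
  refine Summable.of_nonneg_of_le (fun n => by positivity) (fun n => ?_)
    (summable_pow_aux 2 (by norm_num))
  have hn : (0:ℝ) ≤ (n:ℝ) := n.cast_nonneg
  rw [div_le_div_iff₀ (by positivity) (by positivity)]
  nlinarith [pow_nonneg hn 2, pow_nonneg hn 3, pow_nonneg hn 4]

lemma summable_teles : Summable (fun n : ℕ => 1 / ((n:ℝ) + 1) - 1 / ((n:ℝ) + 2)) := by
  refine Summable.of_nonneg_of_le (fun n => ?_) (fun n => ?_) (summable_pow_aux 2 (by norm_num))
  · have hn : (0:ℝ) ≤ (n:ℝ) := n.cast_nonneg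
    have h := one_div_le_one_div_of_le (show (0:ℝ) < (n:ℝ)+1 by linarith)
      (show (n:ℝ)+1 ≤ (n:ℝ)+2 by linarith)
    linarith
  · have hn : (0:ℝ) ≤ (n:ℝ) := n.cast_nonneg
    have e : 1 / ((n:ℝ) + 1) - 1 / ((n:ℝ) + 2) = 1/(((n:ℝ)+1)*((n:ℝ)+2)) := by
      field_simp; ring
    rw [e, div_le_div_iff₀ (by positivity) (by positivity)]
    nlinarith

lemma tsum_teles : ∑' n : ℕ, (1 / ((n:ℝ) + 1) - 1 / ((n:ℝ) + 2)) = 1 := by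
  have h1 := summable_teles.hasSum.tendsto_sum_nat
  have h2 : (fun N => ∑ n ∈ Finset.range N, (1 / ((n:ℝ) + 1) - 1 / ((n:ℝ) + 2)))
      = fun N : ℕ => 1 - 1 / ((N:ℝ) + 1) := by
    funext N
    have h := Finset.sum_range_sub' (f := fun m : ℕ => 1 / ((m:ℝ) + 1)) N
    rw [show (1:ℝ) - 1/((N:ℝ)+1) = (fun m : ℕ => 1 / ((m:ℝ) + 1)) 0 - 1/((N:ℝ)+1) by norm_num,
      ← h]
    refine Finset.sum_congr rfl fun n _ => ?_
    push_cast; ring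
  rw [h2] at h1
  have h3 : Filter.Tendsto (fun N : ℕ => 1 - 1 / ((N:ℝ) + 1)) Filter.atTop (nhds 1) := by
    simpa using Filter.Tendsto.const_sub (1:ℝ) tendsto_one_div_add_atTop_nhds_zero_nat
  exact tendsto_nhds_unique h1 h3

lemma tsum_beta : ∑' n : ℕ, (1 / ((n:ℝ) + 2) ^ 3 + 1 / (((n:ℝ) + 1) ^ 3 * ((n:ℝ) + 2)))
    = 2 * zetaR 3 - zetaR 2 := by
  have s2 := summable_pow_aux 2 (by norm_num)
  have s3 := summable_pow_aux 3 (by norm_num)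
  have SA : zetaR 3 = 1 + ∑' n : ℕ, 1 / ((n:ℝ) + 2) ^ 3 := by
    have h := Summable.tsum_eq_zero_add s3
    have h2 : (∑' n : ℕ, 1 / (((n+1:ℕ):ℝ)+1) ^ 3) = ∑' n : ℕ, 1 / ((n:ℝ)+2)^3 :=
      tsum_congr fun n => by push_cast; ring
    show (∑' n : ℕ, 1 / ((n:ℝ) + 1) ^ 3) = _
    rw [h, h2]; norm_num
  have SB : ∑' n : ℕ, 1 / (((n:ℝ) + 1) ^ 3 * ((n:ℝ) + 2)) = zetaR 3 - zetaR 2 + 1 := by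
    have hid : ∀ n : ℕ, 1 / (((n:ℝ) + 1) ^ 3 * ((n:ℝ) + 2)) =
        (1/((n:ℝ)+1)^3 - 1/((n:ℝ)+1)^2) + (1/((n:ℝ)+1) - 1/((n:ℝ)+2)) := by
      intro n
      have hn : (0:ℝ) ≤ (n:ℝ) := n.cast_nonneg
      have h1 : ((n:ℝ)+1) ≠ 0 := by positivity
      have h2 : ((n:ℝ)+2) ≠ 0 := by positivity
      field_simp
      ring
    rw [tsum_congr hid, Summable.tsum_add (s3.sub s2) summable_teles, Summable.tsum_sub s3 s2, tsum_teles]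
    rfl
  rw [Summable.tsum_add summable_cube summable_mix, SB]
  linarith

lemma key_frac (x a : ℝ) (hx : 0 ≤ x) (ha : 0 ≤ a) :
    (a+1)/((x+a+1)*(x+a+2)^3) + (x+1)/((x+a+1)^3*(x+a+2)) ≤
      1/(a+2)^3 + 1/((a+1)^3*(a+2)) := by
  have h1 : (0:ℝ) < x+a+1 := by linarith
  have h2 : (0:ℝ) < x+a+2 := by linarith
  have h3 : (0:ℝ) < a+1 := by linarith
  have h4 : (0:ℝ) < a+2 := by linarith
  have hE : (0:ℝ) ≤ 400 * x ^ 1 * a ^ 0 +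
      2688 * x ^ 1 * a ^ 1 +
      8152 * x ^ 1 * a ^ 2 +
      14808 * x ^ 1 * a ^ 3 +
      18025 * x ^ 1 * a ^ 4 +
      15558 * x ^ 1 * a ^ 5 +
      9788 * x ^ 1 * a ^ 6 +
      4512 * x ^ 1 * a ^ 7 +
      1496 * x ^ 1 * a ^ 8 +
      339 * x ^ 1 * a ^ 9 +
      47 * x ^ 1 * a ^ 10 +
      3 * x ^ 1 * a ^ 11 +
      1728 * x ^ 2 * a ^ 0 +
      10456 * x ^ 2 * a ^ 1 +
      28356 * x ^ 2 * a ^ 2 +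
      45650 * x ^ 2 * a ^ 3 +
      48639 * x ^ 2 * a ^ 4 +
      36084 * x ^ 2 * a ^ 5 +
      18984 * x ^ 2 * a ^ 6 +
      7016 * x ^ 2 * a ^ 7 +
      1743 * x ^ 2 * a ^ 8 +
      262 * x ^ 2 * a ^ 9 +
      18 * x ^ 2 * a ^ 10 +
      3120 * x ^ 3 * a ^ 0 +
      16736 * x ^ 3 * a ^ 1 +
      39876 * x ^ 3 * a ^ 2 +
      55748 * x ^ 3 * a ^ 3 +
      50746 * x ^ 3 * a ^ 4 +
      31388 * x ^ 3 * a ^ 5 +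
      13250 * x ^ 3 * a ^ 6 +
      3686 * x ^ 3 * a ^ 7 +
      612 * x ^ 3 * a ^ 8 +
      46 * x ^ 3 * a ^ 9 +
      3066 * x ^ 4 * a ^ 0 +
      14299 * x ^ 4 * a ^ 1 +
      29303 * x ^ 4 * a ^ 2 +
      34728 * x ^ 4 * a ^ 3 +
      26230 * x ^ 4 * a ^ 4 +
      13006 * x ^ 4 * a ^ 5 +
      4146 * x ^ 4 * a ^ 6 +
      776 * x ^ 4 * a ^ 7 +
      65 * x ^ 4 * a ^ 8 +
      1784 * x ^ 5 * a ^ 0 +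
      7060 * x ^ 5 * a ^ 1 +
      12120 * x ^ 5 * a ^ 2 +
      11816 * x ^ 5 * a ^ 3 +
      7127 * x ^ 5 * a ^ 4 +
      2673 * x ^ 5 * a ^ 5 +
      577 * x ^ 5 * a ^ 6 +
      55 * x ^ 5 * a ^ 7 +
      620 * x ^ 6 * a ^ 0 +
      2018 * x ^ 6 * a ^ 1 +
      2806 * x ^ 6 * a ^ 2 +
      2164 * x ^ 6 * a ^ 3 +
      986 * x ^ 6 * a ^ 4 +
      252 * x ^ 6 * a ^ 5 +
      28 * x ^ 6 * a ^ 6 +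
      120 * x ^ 7 * a ^ 0 +
      308 * x ^ 7 * a ^ 1 +
      332 * x ^ 7 * a ^ 2 +
      192 * x ^ 7 * a ^ 3 +
      60 * x ^ 7 * a ^ 4 +
      8 * x ^ 7 * a ^ 5 +
      10 * x ^ 8 * a ^ 0 +
      19 * x ^ 8 * a ^ 1 +
      15 * x ^ 8 * a ^ 2 +
      6 * x ^ 8 * a ^ 3 +
      1 * x ^ 8 * a ^ 4 := by
    repeat' apply add_nonneg
    all_goals exact mul_nonneg (mul_nonneg (by norm_num) (pow_nonneg hx _)) (pow_nonneg ha _)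
  rw [div_add_div _ _ (by positivity) (by positivity),
    div_add_div _ _ (by positivity) (by positivity),
    div_le_div_iff₀ (by positivity) (by positivity)]
  nlinarith [hE]

lemma abs_tsum_le_tsum_abs' {f : ℕ → ℝ} (h : Summable fun n => |f n|) :
    |∑' n, f n| ≤ ∑' n, |f n| := by
  have h' : Summable fun n => ‖f n‖ := by simpa [Real.norm_eq_abs] using h
  simpa [Real.norm_eq_abs] using norm_tsum_le_tsum_norm (f := f) h'

lemma final_calc (FY FX PY PX DN D TN ε dyx : ℝ)
    (h1 : |PY - PX - dyx * DN| ≤ ε/3 * |dyx|)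
    (h2 : |FY - FX - (PY - PX)| ≤ TN * |dyx|)
    (h3 : |DN - D| ≤ TN) (h4 : TN < ε/3) :
    |FY - FX - dyx * D| ≤ ε * |dyx| := by
  have e : FY - FX - dyx * D
      = (PY - PX - dyx * DN) + ((FY - FX - (PY - PX)) + dyx * (DN - D)) := by ring
  have habs : |FY - FX - dyx * D| ≤ |PY - PX - dyx * DN|
      + (|FY - FX - (PY - PX)| + |dyx * (DN - D)|) := by
    rw [e]; exact (abs_add_le _ _).trans (by gcongr; exact abs_add_le _ _)
  have h6 : |dyx * (DN - D)| ≤ |dyx| * TN := by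
    rw [abs_mul]; exact mul_le_mul_of_nonneg_left h3 (abs_nonneg _)
  nlinarith [abs_nonneg dyx, mul_le_mul_of_nonneg_right h4.le (abs_nonneg dyx)]

open Finset in
lemma hasDerivWithinAt_tsum_aux {f f' : ℕ → ℝ → ℝ} {u : ℕ → ℝ} {s : Set ℝ}
    (hs : Convex ℝ s) (hu : Summable u)
    (hf : ∀ n, ∀ y ∈ s, HasDerivWithinAt (f n) (f' n y) s y)
    (hb : ∀ n, ∀ y ∈ s, |f' n y| ≤ u n)
    (hsum : ∀ y ∈ s, Summable fun n => f n y)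
    {x : ℝ} (hx : x ∈ s) :
    HasDerivWithinAt (fun y => ∑' n, f n y) (∑' n, f' n x) s x := by
  have hu0 : ∀ n, 0 ≤ u n := fun n => le_trans (abs_nonneg _) (hb n x hx)
  have hsf' : ∀ y ∈ s, Summable fun n => |f' n y| := fun y hy =>
    Summable.of_nonneg_of_le (fun n => abs_nonneg _) (fun n => hb n y hy) hu
  rw [hasDerivWithinAt_iff_isLittleO, Asymptotics.isLittleO_iff]
  intro ε hε
  obtain ⟨N, hN⟩ : ∃ N, ∑' i, u (i + N) < ε/3 :=
    ((tendsto_sum_nat_add u).eventually (gt_mem_nhds (show (0:ℝ) < ε/3 by linarith))).exists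
  have hrem : ∀ y ∈ s, |(∑' n, f n y) - (∑' n, f n x)
      - ((∑ n ∈ range N, f n y) - (∑ n ∈ range N, f n x))| ≤ (∑' i, u (i + N)) * |y - x| := by
    intro y hy
    have hRy : (∑' i, f (i + N) y) = (∑' n, f n y) - ∑ n ∈ range N, f n y := by
      rw [← Summable.sum_add_tsum_nat_add N (hsum y hy)]; ring
    have hRx : (∑' i, f (i + N) x) = (∑' n, f n x) - ∑ n ∈ range N, f n x := by
      rw [← Summable.sum_add_tsum_nat_add N (hsum x hx)]; ring
    have hterm : ∀ i, |f (i + N) y - f (i + N) x| ≤ u (i + N) * |y - x| := by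
      intro i
      have := hs.norm_image_sub_le_of_norm_hasDerivWithin_le
        (f := f (i + N)) (f' := fun z => f' (i + N) z)
        (fun z hz => hf (i + N) z hz) (fun z hz => hb (i + N) z hz) hx hy
      simpa [Real.norm_eq_abs] using this
    have hsumm : Summable fun i => |f (i + N) y - f (i + N) x| :=
      Summable.of_nonneg_of_le (fun i => abs_nonneg _) hterm
        (((summable_nat_add_iff N).2 hu).mul_right _)
    have hsub : (∑' i, (f (i + N) y - f (i + N) x))
        = (∑' i, f (i + N) y) - (∑' i, f (i + N) x) :=
      Summable.tsum_sub ((summable_nat_add_iff N).2 (hsum y hy)) ((summable_nat_add_iff N).2 (hsum x hx))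
    have habs : |∑' i, (f (i + N) y - f (i + N) x)| ≤ (∑' i, u (i + N)) * |y - x| :=
      calc |∑' i, (f (i + N) y - f (i + N) x)| ≤ ∑' i, |f (i + N) y - f (i + N) x| :=
            abs_tsum_le_tsum_abs' hsumm
        _ ≤ ∑' i, u (i + N) * |y - x| :=
            Summable.tsum_le_tsum hterm hsumm (((summable_nat_add_iff N).2 hu).mul_right _)
        _ = (∑' i, u (i + N)) * |y - x| := by rw [tsum_mul_right]
    calc |(∑' n, f n y) - (∑' n, f n x) - ((∑ n ∈ range N, f n y) - (∑ n ∈ range N, f n x))|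
        = |∑' i, (f (i + N) y - f (i + N) x)| := by rw [hsub, hRy, hRx]; congr 1; ring
      _ ≤ (∑' i, u (i + N)) * |y - x| := habs
  have hDN : |(∑' n, f' n x) - ∑ n ∈ range N, f' n x| ≤ ∑' i, u (i + N) := by
    have h1 : (∑' i, f' (i + N) x) = (∑' n, f' n x) - ∑ n ∈ range N, f' n x := by
      rw [← Summable.sum_add_tsum_nat_add N (hsf' x hx).of_abs]; ring
    rw [← h1]
    calc |∑' i, f' (i + N) x| ≤ ∑' i, |f' (i + N) x| :=
          abs_tsum_le_tsum_abs' ((summable_nat_add_iff N).2 (hsf' x hx))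
      _ ≤ ∑' i, u (i + N) := Summable.tsum_le_tsum (fun i => hb (i + N) x hx)
          ((summable_nat_add_iff N).2 (hsf' x hx)) ((summable_nat_add_iff N).2 hu)
  have HN : HasDerivWithinAt (fun y => ∑ n ∈ range N, f n y) (∑ n ∈ range N, f' n x) s x :=
    HasDerivWithinAt.fun_sum fun n _ => hf n x hx
  have h4 := (Asymptotics.isLittleO_iff.1 (hasDerivWithinAt_iff_isLittleO.1 HN))
    (show 0 < ε/3 by linarith)
  filter_upwards [h4, self_mem_nhdsWithin] with y hy4 hys
  have hy4' : |(∑ n ∈ range N, f n y) - (∑ n ∈ range N, f n x)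
      - (y - x) * (∑ n ∈ range N, f' n x)| ≤ ε/3 * |y - x| := by
    simpa [Real.norm_eq_abs, smul_eq_mul] using hy4
  simp only [Real.norm_eq_abs, smul_eq_mul]
  exact final_calc _ _ _ _ _ _ _ _ _ hy4' (hrem y hys)
    (by rw [abs_sub_comm]; exact hDN) hN

lemma abel_aux_s13 (σ G : ℕ → ℝ) (hσ0 : σ 0 = 0)
    (hlim : Filter.Tendsto (fun n => σ n * G n) Filter.atTop (nhds 0))
    (hsd : Summable fun n => (σ n - σ (n+1)) * G n)
    (hse : Summable fun n => σ (n+1) * (G (n+1) - G n)) :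
    ∑' n, (σ n - σ (n+1)) * G n = ∑' n, σ (n+1) * (G (n+1) - G n) := by
  have T1 := hsd.hasSum.tendsto_sum_nat
  have T2 := hse.hasSum.tendsto_sum_nat
  have T3 := T1.sub T2
  have e : (fun N => (∑ n ∈ Finset.range N, (σ n - σ (n+1)) * G n)
      - ∑ n ∈ Finset.range N, σ (n+1) * (G (n+1) - G n)) = fun N => - (σ N * G N) := by
    funext N
    rw [← Finset.sum_sub_distrib]
    calc ∑ n ∈ Finset.range N, ((σ n - σ (n+1)) * G n - σ (n+1) * (G (n+1) - G n))
        = ∑ n ∈ Finset.range N, ((fun m => σ m * G m) n - (fun m => σ m * G m) (n+1)) :=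
          Finset.sum_congr rfl fun n _ => by ring
      _ = σ 0 * G 0 - σ N * G N := Finset.sum_range_sub' (fun m => σ m * G m) N
      _ = - (σ N * G N) := by rw [hσ0]; ring
  rw [e] at T3
  have T4 : Filter.Tendsto (fun N => - (σ N * G N)) Filter.atTop (nhds 0) := by
    simpa using hlim.neg
  have h := tendsto_nhds_unique T3 T4
  linarith

end Aux

section Terms

lemma term_hasDeriv (g : ℝ → ℝ) (hg : DifferentiableOn ℝ g (Set.Icc 0 1)) (n : ℕ) (y : ℝ)
    (hy : y ∈ Set.Icc (0:ℝ) 1) :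
    HasDerivWithinAt
      (fun z => (z+1)/((z+((n:ℝ)+1))*(z+((n:ℝ)+1)+1)) * g (1/(z+((n:ℝ)+1))))
      (((n:ℝ)/(y+((n:ℝ)+1))^2 - ((n:ℝ)+1)/(y+((n:ℝ)+1)+1)^2) * g (1/(y+((n:ℝ)+1)))
        + (y+1)/((y+((n:ℝ)+1))*(y+((n:ℝ)+1)+1)) *
          (derivWithin g (Set.Icc 0 1) (1/(y+((n:ℝ)+1))) * -(1/(y+((n:ℝ)+1))^2)))
      (Set.Icc 0 1) y := by
  have hy0 : (0:ℝ) ≤ y := hy.1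
  have hn : (0:ℝ) ≤ (n:ℝ) := n.cast_nonneg
  have hA : (0:ℝ) < y + ((n:ℝ)+1) := by linarith
  have hB : (0:ℝ) < y + ((n:ℝ)+1) + 1 := by linarith
  have hmem : (1/(y+((n:ℝ)+1))) ∈ Set.Icc (0:ℝ) 1 :=
    ⟨by positivity, by rw [div_le_one hA]; linarith⟩
  have hd1 : HasDerivAt (fun z : ℝ => z + ((n:ℝ)+1)) 1 y := (hasDerivAt_id y).add_const _
  have hd2 : HasDerivAt (fun z : ℝ => z + ((n:ℝ)+1) + 1) 1 y := hd1.add_const 1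
  have hnum : HasDerivAt (fun z : ℝ => z + 1) 1 y := (hasDerivAt_id y).add_const 1
  have hden : HasDerivAt (fun z : ℝ => (z + ((n:ℝ)+1)) * (z + ((n:ℝ)+1) + 1))
      (1 * (y + ((n:ℝ)+1) + 1) + (y + ((n:ℝ)+1)) * 1) y := hd1.mul hd2
  have hq : HasDerivAt (fun z : ℝ => (z+1)/((z+((n:ℝ)+1))*(z+((n:ℝ)+1)+1)))
      ((1 * ((y + ((n:ℝ)+1)) * (y + ((n:ℝ)+1) + 1))
        - (y+1) * (1 * (y + ((n:ℝ)+1) + 1) + (y + ((n:ℝ)+1)) * 1))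
        / ((y + ((n:ℝ)+1)) * (y + ((n:ℝ)+1) + 1))^2) y :=
    hnum.div hden (by positivity)
  have hq' : HasDerivAt (fun z : ℝ => (z+1)/((z+((n:ℝ)+1))*(z+((n:ℝ)+1)+1)))
      ((n:ℝ)/(y+((n:ℝ)+1))^2 - ((n:ℝ)+1)/(y+((n:ℝ)+1)+1)^2) y := by
    convert hq using 1
    field_simp
    ring
  have hinv : HasDerivAt (fun z : ℝ => 1/(z+((n:ℝ)+1))) (-(1/(y+((n:ℝ)+1))^2)) y := by
    have h := hd1.inv (ne_of_gt hA)
    have h2 : HasDerivAt (fun z : ℝ => 1/(z+((n:ℝ)+1))) (-1 / (y+((n:ℝ)+1))^2) y := by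
      simp only [one_div]
      exact h
    convert h2 using 1
    ring
  have hgz : HasDerivWithinAt g (derivWithin g (Set.Icc 0 1) (1/(y+((n:ℝ)+1))))
      (Set.Icc 0 1) (1/(y+((n:ℝ)+1))) := (hg _ hmem).hasDerivWithinAt
  have hmaps : Set.MapsTo (fun z : ℝ => 1/(z+((n:ℝ)+1))) (Set.Icc 0 1) (Set.Icc 0 1) := by
    intro z hz
    have hz0 : (0:ℝ) ≤ z := hz.1
    have hzA : (0:ℝ) < z + ((n:ℝ)+1) := by linarith
    exact ⟨by positivity, by rw [div_le_one hzA]; linarith⟩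
  have hcomp := HasDerivWithinAt.comp y hgz hinv.hasDerivWithinAt hmaps
  exact hq'.hasDerivWithinAt.mul hcomp

lemma term_bound (g : ℝ → ℝ) (M C : ℝ) (hM0 : 0 ≤ M)
    (hMb : ∀ z ∈ Set.Icc (0:ℝ) 1, |derivWithin g (Set.Icc 0 1) z| ≤ M)
    (hgb : ∀ z ∈ Set.Icc (0:ℝ) 1, |g z| ≤ C)
    (n : ℕ) (y : ℝ) (hy : y ∈ Set.Icc (0:ℝ) 1) :
    |((n:ℝ)/(y+((n:ℝ)+1))^2 - ((n:ℝ)+1)/(y+((n:ℝ)+1)+1)^2) * g (1/(y+((n:ℝ)+1)))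
        + (y+1)/((y+((n:ℝ)+1))*(y+((n:ℝ)+1)+1)) *
          (derivWithin g (Set.Icc 0 1) (1/(y+((n:ℝ)+1))) * -(1/(y+((n:ℝ)+1))^2))|
      ≤ (3*C + 2*M) / (((n:ℝ)+1)*((n:ℝ)+2)) := by
  have hy0 : (0:ℝ) ≤ y := hy.1
  have hy1 : y ≤ 1 := hy.2
  have hn : (0:ℝ) ≤ (n:ℝ) := n.cast_nonneg
  set A := y + ((n:ℝ)+1) with hAdef
  have hA1 : (1:ℝ) ≤ A := by rw [hAdef]; linarith
  have hA : (0:ℝ) < A := by linarith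
  have hB : (0:ℝ) < A + 1 := by linarith
  have hkA : (n:ℝ) + 1 ≤ A := by rw [hAdef]; linarith
  have hmem : (1/A) ∈ Set.Icc (0:ℝ) 1 := ⟨by positivity, by rw [div_le_one hA]; linarith⟩
  have e1 : (n:ℝ)/A^2 - ((n:ℝ)+1)/(A+1)^2 = ((n:ℝ)*(2*A+1) - A^2)/(A^2*(A+1)^2) := by
    field_simp
    ring
  have hnumb : |(n:ℝ)*(2*A+1) - A^2| ≤ 3*A^2 := by
    rw [abs_le]
    constructor
    · nlinarith
    · nlinarith
  have h1 : |(n:ℝ)/A^2 - ((n:ℝ)+1)/(A+1)^2| ≤ 3/(((n:ℝ)+1)*((n:ℝ)+2)) := by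
    rw [e1, abs_div, abs_of_pos (by positivity : (0:ℝ) < A^2*(A+1)^2),
      div_le_div_iff₀ (by positivity) (by positivity)]
    have hfac : ((n:ℝ)+1)*((n:ℝ)+2) ≤ (A+1)^2 := by nlinarith
    nlinarith [mul_le_mul_of_nonneg_right hnumb
        (le_of_lt (show (0:ℝ) < ((n:ℝ)+1)*((n:ℝ)+2) by positivity)),
      mul_le_mul_of_nonneg_left hfac (by positivity : (0:ℝ) ≤ 3*A^2)]
  have h2 : |(y+1)/(A*(A+1))| ≤ 2/(((n:ℝ)+1)*((n:ℝ)+2)) := by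
    rw [abs_of_pos (by positivity)]
    apply div_le_div₀ (by norm_num) (by linarith) (by positivity)
    nlinarith
  have h3 : |derivWithin g (Set.Icc 0 1) (1/A) * -(1/A^2)| ≤ M := by
    rw [abs_mul]
    have hd := hMb _ hmem
    have hA2 : |-(1/A^2)| ≤ 1 := by
      rw [abs_neg, abs_of_pos (by positivity)]
      rw [div_le_one (by positivity)]
      nlinarith
    calc |derivWithin g (Set.Icc 0 1) (1/A)| * |-(1/A^2)| ≤ M * 1 :=
          mul_le_mul hd hA2 (abs_nonneg _) hM0
      _ = M := mul_one M
  have hsplit := abs_add_le (((n:ℝ)/A^2 - ((n:ℝ)+1)/(A+1)^2) * g (1/A))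
    ((y+1)/(A*(A+1)) * (derivWithin g (Set.Icc 0 1) (1/A) * -(1/A^2)))
  have hp1 : |((n:ℝ)/A^2 - ((n:ℝ)+1)/(A+1)^2) * g (1/A)| ≤ (3/(((n:ℝ)+1)*((n:ℝ)+2))) * C := by
    rw [abs_mul]
    exact mul_le_mul h1 (hgb _ hmem) (abs_nonneg _) (by positivity)
  have hp2 : |(y+1)/(A*(A+1)) * (derivWithin g (Set.Icc 0 1) (1/A) * -(1/A^2))|
      ≤ (2/(((n:ℝ)+1)*((n:ℝ)+2))) * M := by
    rw [abs_mul]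
    exact mul_le_mul h2 h3 (abs_nonneg _) (by positivity)
  have heq : (3/(((n:ℝ)+1)*((n:ℝ)+2))) * C + (2/(((n:ℝ)+1)*((n:ℝ)+2))) * M
      = (3*C + 2*M) / (((n:ℝ)+1)*((n:ℝ)+2)) := by ring
  linarith

noncomputable def sigma_aux (x : ℝ) (m : ℕ) : ℝ := (m:ℝ)/(x+(m:ℝ)+1)^2

noncomputable def G_aux (g : ℝ → ℝ) (x : ℝ) (n : ℕ) : ℝ := g (1/(x+((n:ℝ)+1)))

noncomputable def b_aux (g : ℝ → ℝ) (x : ℝ) (n : ℕ) : ℝ :=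
  (x+1)/((x+((n:ℝ)+1))*(x+((n:ℝ)+1)+1)) *
    (derivWithin g (Set.Icc 0 1) (1/(x+((n:ℝ)+1))) * -(1/(x+((n:ℝ)+1))^2))

lemma sigma_aux_nonneg (x : ℝ) (m : ℕ) : 0 ≤ sigma_aux x m :=
  div_nonneg m.cast_nonneg (by positivity)

lemma sigma_aux_le (x : ℝ) (hx0 : 0 ≤ x) (n : ℕ) : sigma_aux x n ≤ 1/((n:ℝ)+1) := by
  unfold sigma_aux
  have hn : (0:ℝ) ≤ (n:ℝ) := n.cast_nonneg
  rw [div_le_div_iff₀ (by positivity) (by positivity)]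
  nlinarith

lemma eb_combined (g : ℝ → ℝ) (M : ℝ) (hM0 : 0 ≤ M)
    (hMb : ∀ z ∈ Set.Icc (0:ℝ) 1, |derivWithin g (Set.Icc 0 1) z| ≤ M)
    (hglip : ∀ y ∈ Set.Icc (0:ℝ) 1, ∀ z ∈ Set.Icc (0:ℝ) 1, |g z - g y| ≤ M * |z - y|)
    (x : ℝ) (hx0 : 0 ≤ x) (hx1 : x ≤ 1) (n : ℕ) :
    |sigma_aux x (n+1) * (G_aux g x (n+1) - G_aux g x n)|
        ≤ M * (((n:ℝ)+1)/((x+(n:ℝ)+1)*(x+(n:ℝ)+2)^3))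
    ∧ |b_aux g x n| ≤ M * ((x+1)/((x+(n:ℝ)+1)^3*(x+(n:ℝ)+2))) := by
  have hn : (0:ℝ) ≤ (n:ℝ) := n.cast_nonneg
  have hA : (0:ℝ) < x+(n:ℝ)+1 := by linarith
  have hB : (0:ℝ) < x+(n:ℝ)+2 := by linarith
  have hA' : (0:ℝ) < x+((n:ℝ)+1) := by linarith
  have hm1 : 1/(x+((n:ℝ)+1)) ∈ Set.Icc (0:ℝ) 1 :=
    ⟨le_of_lt (one_div_pos.2 hA'), by rw [div_le_one hA']; linarith⟩
  have hA2' : (0:ℝ) < x+((((n+1):ℕ):ℝ)+1) := by push_cast; linarith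
  have hm2 : 1/(x+((((n+1):ℕ):ℝ)+1)) ∈ Set.Icc (0:ℝ) 1 :=
    ⟨le_of_lt (one_div_pos.2 hA2'), by rw [div_le_one hA2']; push_cast; linarith⟩
  constructor
  · have hlip := hglip _ hm1 _ hm2
    have ediff : (1:ℝ)/(x+((((n+1):ℕ):ℝ)+1)) - 1/(x+((n:ℝ)+1))
        = -(1/((x+(n:ℝ)+1)*(x+(n:ℝ)+2))) := by
      have hne1 : x + ((n:ℝ)+1) ≠ 0 := ne_of_gt hA'
      have hne2 : x + ((n:ℝ)+1+1) ≠ 0 := by intro h; nlinarith [h]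
      have hne3 : (x+(n:ℝ)+1)*(x+(n:ℝ)+2) ≠ 0 := ne_of_gt (mul_pos hA hB)
      push_cast
      field_simp
      ring
    have habs : |(1:ℝ)/(x+((((n+1):ℕ):ℝ)+1)) - 1/(x+((n:ℝ)+1))|
        = 1/((x+(n:ℝ)+1)*(x+(n:ℝ)+2)) := by
      rw [ediff, abs_neg, abs_of_pos (one_div_pos.2 (mul_pos hA hB))]
    have hσ : sigma_aux x (n+1) = ((n:ℝ)+1)/((x+(n:ℝ)+2))^2 := by
      unfold sigma_aux
      push_cast
      ring_nf
    have hσnn : 0 ≤ ((n:ℝ)+1)/((x+(n:ℝ)+2))^2 := div_nonneg (by linarith) (by positivity)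
    have hGeq : G_aux g x (n+1) - G_aux g x n
        = g (1/(x+((((n+1):ℕ):ℝ)+1))) - g (1/(x+((n:ℝ)+1))) := rfl
    rw [hGeq, abs_mul, hσ, abs_of_nonneg hσnn]
    calc ((n:ℝ)+1)/((x+(n:ℝ)+2))^2 * |g (1/(x+((((n+1):ℕ):ℝ)+1))) - g (1/(x+((n:ℝ)+1)))|
        ≤ ((n:ℝ)+1)/((x+(n:ℝ)+2))^2 * (M * (1/((x+(n:ℝ)+1)*(x+(n:ℝ)+2)))) := by
          apply mul_le_mul_of_nonneg_left _ hσnn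
          rw [← habs]
          exact hlip
      _ = M * (((n:ℝ)+1)/((x+(n:ℝ)+1)*(x+(n:ℝ)+2)^3)) := by
          field_simp
  · unfold b_aux
    rw [abs_mul, abs_mul]
    have h1 : |(x+1)/((x+((n:ℝ)+1))*(x+((n:ℝ)+1)+1))|
        = (x+1)/((x+((n:ℝ)+1))*(x+((n:ℝ)+1)+1)) :=
      abs_of_pos (div_pos (by linarith) (mul_pos hA' (by linarith)))
    have h2 : |-(1/(x+((n:ℝ)+1))^2)| = 1/(x+((n:ℝ)+1))^2 := by
      rw [abs_neg, abs_of_pos (one_div_pos.2 (pow_pos hA' 2))]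
    rw [h1, h2]
    have h3 := hMb _ hm1
    calc (x+1)/((x+((n:ℝ)+1))*(x+((n:ℝ)+1)+1))
          * (|derivWithin g (Set.Icc 0 1) (1/(x+((n:ℝ)+1)))| * (1/(x+((n:ℝ)+1))^2))
        ≤ (x+1)/((x+((n:ℝ)+1))*(x+((n:ℝ)+1)+1)) * (M * (1/(x+((n:ℝ)+1))^2)) := by
          apply mul_le_mul_of_nonneg_left _
            (le_of_lt (div_pos (by linarith) (mul_pos hA' (by linarith))))
          exact mul_le_mul_of_nonneg_right h3 (le_of_lt (one_div_pos.2 (pow_pos hA' 2)))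
      _ = M * ((x+1)/((x+(n:ℝ)+1)^3*(x+(n:ℝ)+2))) := by
          field_simp
          ring

end Terms

theorem perron_frobenius_contraction (g : ℝ → ℝ)
    (hg : ContDiffOn ℝ 1 g (Set.Icc 0 1)) (M : ℝ)
    (hM : IsGreatest {y : ℝ | ∃ x ∈ Set.Icc (0:ℝ) 1, y = |derivWithin g (Set.Icc 0 1) x|} M) :
    ∀ x ∈ Set.Icc (0:ℝ) 1,
      |derivWithin
        (fun y : ℝ => ∑' i : ℕ,
          (y + 1) / ((y + (i + 1)) * (y + (i + 1) + 1)) * g (1 / (y + (i + 1))))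
        (Set.Icc 0 1) x| ≤ (2 * zetaR 3 - zetaR 2) * M := by
  intro x hx
  have hx0 : (0:ℝ) ≤ x := hx.1
  have hx1 : x ≤ 1 := hx.2
  have hgd : DifferentiableOn ℝ g (Set.Icc 0 1) := hg.differentiableOn one_ne_zero
  have hM0 : (0:ℝ) ≤ M := by
    obtain ⟨z, hz, hzeq⟩ := hM.1
    rw [hzeq]; exact abs_nonneg _
  have hMb : ∀ z ∈ Set.Icc (0:ℝ) 1, |derivWithin g (Set.Icc 0 1) z| ≤ M :=
    fun z hz => hM.2 ⟨z, hz, rfl⟩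
  have hglip : ∀ y ∈ Set.Icc (0:ℝ) 1, ∀ z ∈ Set.Icc (0:ℝ) 1, |g z - g y| ≤ M * |z - y| := by
    intro y hy z hz
    have h := (convex_Icc (0:ℝ) 1).norm_image_sub_le_of_norm_hasDerivWithin_le
      (f := g) (f' := fun w => derivWithin g (Set.Icc 0 1) w)
      (fun w hw => (hgd w hw).hasDerivWithinAt) hMb hy hz
    simpa [Real.norm_eq_abs] using h
  set C := M + |g 1| with hCdef
  have hC0 : (0:ℝ) ≤ C := by positivity
  have hgb : ∀ z ∈ Set.Icc (0:ℝ) 1, |g z| ≤ C := by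
    intro z hz
    have h1 := hglip 1 ⟨by norm_num, le_refl 1⟩ z hz
    have h2 : |z - 1| ≤ 1 := by
      rw [abs_le]; exact ⟨by linarith [hz.1], by linarith [hz.2]⟩
    have h3 := abs_sub_abs_le_abs_sub (g z) (g 1)
    nlinarith [mul_le_mul_of_nonneg_left h2 hM0]
  -- summability of the uniform derivative bound
  have hu : Summable (fun n : ℕ => (3*C + 2*M) / (((n:ℝ)+1)*((n:ℝ)+2))) := by
    refine Summable.of_nonneg_of_le (fun n => ?_) (fun n => ?_)
      ((summable_pow_aux 2 (by norm_num)).mul_left (3*C+2*M))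
    · have hn : (0:ℝ) ≤ (n:ℝ) := n.cast_nonneg
      apply div_nonneg (by linarith) (by positivity)
    · have hn : (0:ℝ) ≤ (n:ℝ) := n.cast_nonneg
      rw [mul_one_div, div_le_div_iff₀ (by positivity) (by positivity)]
      nlinarith [mul_le_mul_of_nonneg_left
        (show ((n:ℝ)+1)^2 ≤ ((n:ℝ)+1)*((n:ℝ)+2) by nlinarith)
        (show (0:ℝ) ≤ 3*C+2*M by linarith)]
  -- summability of the series itself
  have hsum : ∀ y ∈ Set.Icc (0:ℝ) 1, Summable (fun n : ℕ =>
      (y+1)/((y+((n:ℝ)+1))*(y+((n:ℝ)+1)+1)) * g (1/(y+((n:ℝ)+1)))) := by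
    intro y hy
    have hy0 : (0:ℝ) ≤ y := hy.1
    have hy1 : y ≤ 1 := hy.2
    refine Summable.of_abs (Summable.of_nonneg_of_le (fun n => abs_nonneg _) (fun n => ?_)
      ((summable_pow_aux 2 (by norm_num)).mul_left (2*C)))
    have hn : (0:ℝ) ≤ (n:ℝ) := n.cast_nonneg
    have hA : (0:ℝ) < y + ((n:ℝ)+1) := by linarith
    have hmem : (1/(y+((n:ℝ)+1))) ∈ Set.Icc (0:ℝ) 1 :=
      ⟨le_of_lt (one_div_pos.2 hA), by rw [div_le_one hA]; linarith⟩
    rw [abs_mul, mul_one_div]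
    have hq : |(y+1)/((y+((n:ℝ)+1))*(y+((n:ℝ)+1)+1))| ≤ 2/((n:ℝ)+1)^2 := by
      rw [abs_of_pos (div_pos (by linarith) (mul_pos hA (by linarith)))]
      apply div_le_div₀ (by norm_num) (by linarith) (by positivity)
      nlinarith
    calc |(y+1)/((y+((n:ℝ)+1))*(y+((n:ℝ)+1)+1))| * |g (1/(y+((n:ℝ)+1)))|
        ≤ (2/((n:ℝ)+1)^2) * C :=
          mul_le_mul hq (hgb _ hmem) (abs_nonneg _) (by positivity)
      _ = 2*C/((n:ℝ)+1)^2 := by ring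
  -- termwise differentiation of the series
  have hderiv := hasDerivWithinAt_tsum_aux (s := Set.Icc (0:ℝ) 1)
    (f := fun (n : ℕ) (y : ℝ) => (y+1)/((y+((n:ℝ)+1))*(y+((n:ℝ)+1)+1)) * g (1/(y+((n:ℝ)+1))))
    (f' := fun (n : ℕ) (y : ℝ) =>
      ((n:ℝ)/(y+((n:ℝ)+1))^2 - ((n:ℝ)+1)/(y+((n:ℝ)+1)+1)^2) * g (1/(y+((n:ℝ)+1)))
        + (y+1)/((y+((n:ℝ)+1))*(y+((n:ℝ)+1)+1)) *
          (derivWithin g (Set.Icc 0 1) (1/(y+((n:ℝ)+1))) * -(1/(y+((n:ℝ)+1))^2)))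
    (convex_Icc 0 1) hu
    (fun n y hy => term_hasDeriv g hgd n y hy)
    (fun n y hy => term_bound g M C hM0 hMb hgb n y hy)
    hsum hx
  have hDW : derivWithin
      (fun y : ℝ => ∑' i : ℕ,
        (y + 1) / ((y + (i + 1)) * (y + (i + 1) + 1)) * g (1 / (y + (i + 1))))
      (Set.Icc 0 1) x
      = ∑' n : ℕ,
        (((n:ℝ)/(x+((n:ℝ)+1))^2 - ((n:ℝ)+1)/(x+((n:ℝ)+1)+1)^2) * g (1/(x+((n:ℝ)+1)))
        + (x+1)/((x+((n:ℝ)+1))*(x+((n:ℝ)+1)+1)) *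
          (derivWithin g (Set.Icc 0 1) (1/(x+((n:ℝ)+1))) * -(1/(x+((n:ℝ)+1))^2))) :=
    hderiv.derivWithin (uniqueDiffOn_Icc_zero_one x hx)
  rw [hDW]
  -- rearrange the derivative series (Abel summation)
  have hfd : ∀ n : ℕ,
      (((n:ℝ)/(x+((n:ℝ)+1))^2 - ((n:ℝ)+1)/(x+((n:ℝ)+1)+1)^2) * g (1/(x+((n:ℝ)+1)))
        + (x+1)/((x+((n:ℝ)+1))*(x+((n:ℝ)+1)+1)) *
          (derivWithin g (Set.Icc 0 1) (1/(x+((n:ℝ)+1))) * -(1/(x+((n:ℝ)+1))^2)))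
      = (sigma_aux x n - sigma_aux x (n+1)) * G_aux g x n + b_aux g x n := by
    intro n
    unfold sigma_aux G_aux b_aux
    push_cast
    ring
  -- bounds for the two families
  have hkey : ∀ n : ℕ,
      ((n:ℝ)+1)/((x+(n:ℝ)+1)*(x+(n:ℝ)+2)^3) + (x+1)/((x+(n:ℝ)+1)^3*(x+(n:ℝ)+2))
        ≤ 1/((n:ℝ)+2)^3 + 1/(((n:ℝ)+1)^3*((n:ℝ)+2)) :=
    fun n => key_frac x (n:ℝ) hx0 n.cast_nonneg
  have hterm1 : ∀ n : ℕ, |sigma_aux x (n+1) * (G_aux g x (n+1) - G_aux g x n)|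
      ≤ M * (((n:ℝ)+1)/((x+(n:ℝ)+1)*(x+(n:ℝ)+2)^3)) :=
    fun n => (eb_combined g M hM0 hMb hglip x hx0 hx1 n).1
  have hterm2 : ∀ n : ℕ, |b_aux g x n| ≤ M * ((x+1)/((x+(n:ℝ)+1)^3*(x+(n:ℝ)+2))) :=
    fun n => (eb_combined g M hM0 hMb hglip x hx0 hx1 n).2
  have htnn : ∀ n : ℕ, (0:ℝ) ≤ ((n:ℝ)+1)/((x+(n:ℝ)+1)*(x+(n:ℝ)+2)^3) := by
    intro n
    have hn : (0:ℝ) ≤ (n:ℝ) := n.cast_nonneg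
    exact div_nonneg (by linarith) (le_of_lt (mul_pos (by linarith) (pow_pos (by linarith) 3)))
  have htnn2 : ∀ n : ℕ, (0:ℝ) ≤ (x+1)/((x+(n:ℝ)+1)^3*(x+(n:ℝ)+2)) := by
    intro n
    have hn : (0:ℝ) ≤ (n:ℝ) := n.cast_nonneg
    exact div_nonneg (by linarith) (le_of_lt (mul_pos (pow_pos (by linarith) 3) (by linarith)))
  have hbeta : Summable (fun n : ℕ => M * (1/((n:ℝ)+2)^3 + 1/(((n:ℝ)+1)^3*((n:ℝ)+2)))) :=
    (summable_cube.add summable_mix).mul_left M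
  have hebound : ∀ n : ℕ, |sigma_aux x (n+1) * (G_aux g x (n+1) - G_aux g x n)|
      ≤ M * (1/((n:ℝ)+2)^3 + 1/(((n:ℝ)+1)^3*((n:ℝ)+2))) := by
    intro n
    refine le_trans (hterm1 n) ?_
    apply mul_le_mul_of_nonneg_left _ hM0
    exact le_trans (le_add_of_nonneg_right (htnn2 n)) (hkey n)
  have hbbound : ∀ n : ℕ, |b_aux g x n|
      ≤ M * (1/((n:ℝ)+2)^3 + 1/(((n:ℝ)+1)^3*((n:ℝ)+2))) := by
    intro n
    refine le_trans (hterm2 n) ?_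
    apply mul_le_mul_of_nonneg_left _ hM0
    exact le_trans (le_add_of_nonneg_left (htnn n)) (hkey n)
  have hse_abs : Summable (fun n : ℕ => |sigma_aux x (n+1) * (G_aux g x (n+1) - G_aux g x n)|) :=
    Summable.of_nonneg_of_le (fun n => abs_nonneg _) hebound hbeta
  have hsb_abs : Summable (fun n : ℕ => |b_aux g x n|) :=
    Summable.of_nonneg_of_le (fun n => abs_nonneg _) hbbound hbeta
  have hse : Summable (fun n : ℕ => sigma_aux x (n+1) * (G_aux g x (n+1) - G_aux g x n)) :=
    hse_abs.of_abs
  have hsb : Summable (fun n : ℕ => b_aux g x n) := hsb_abs.of_abs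
  have hsf'x : Summable (fun n : ℕ =>
      ((n:ℝ)/(x+((n:ℝ)+1))^2 - ((n:ℝ)+1)/(x+((n:ℝ)+1)+1)^2) * g (1/(x+((n:ℝ)+1)))
        + (x+1)/((x+((n:ℝ)+1))*(x+((n:ℝ)+1)+1)) *
          (derivWithin g (Set.Icc 0 1) (1/(x+((n:ℝ)+1))) * -(1/(x+((n:ℝ)+1))^2))) :=
    Summable.of_abs (Summable.of_nonneg_of_le (fun n => abs_nonneg _)
      (fun n => term_bound g M C hM0 hMb hgb n x hx) hu)
  have hsd : Summable (fun n : ℕ => (sigma_aux x n - sigma_aux x (n+1)) * G_aux g x n) := by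
    refine (hsf'x.sub hsb).congr fun n => ?_
    rw [hfd n]
    ring
  -- Abel summation
  have hσ0 : sigma_aux x 0 = 0 := by unfold sigma_aux; simp
  have hlim : Filter.Tendsto (fun n => sigma_aux x n * G_aux g x n) Filter.atTop (nhds 0) := by
    apply squeeze_zero_norm (a := fun n : ℕ => C * (1/((n:ℝ)+1)))
    · intro n
      have hn : (0:ℝ) ≤ (n:ℝ) := n.cast_nonneg
      have hσnn := sigma_aux_nonneg x n
      have hσle := sigma_aux_le x hx0 n
      have hA : (0:ℝ) < x + ((n:ℝ)+1) := by linarith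
      have hmem : (1/(x+((n:ℝ)+1))) ∈ Set.Icc (0:ℝ) 1 :=
        ⟨le_of_lt (one_div_pos.2 hA), by rw [div_le_one hA]; linarith⟩
      have hGb : |G_aux g x n| ≤ C := hgb _ hmem
      rw [Real.norm_eq_abs, abs_mul, abs_of_nonneg hσnn]
      calc sigma_aux x n * |G_aux g x n| ≤ (1/((n:ℝ)+1)) * C :=
            mul_le_mul hσle hGb (abs_nonneg _) (by positivity)
        _ = C * (1/((n:ℝ)+1)) := by ring
    · simpa using tendsto_one_div_add_atTop_nhds_zero_nat.const_mul C
  have habel := abel_aux_s13 (sigma_aux x) (G_aux g x) hσ0 hlim hsd hse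
  -- final estimate
  calc |∑' n : ℕ,
      (((n:ℝ)/(x+((n:ℝ)+1))^2 - ((n:ℝ)+1)/(x+((n:ℝ)+1)+1)^2) * g (1/(x+((n:ℝ)+1)))
        + (x+1)/((x+((n:ℝ)+1))*(x+((n:ℝ)+1)+1)) *
          (derivWithin g (Set.Icc 0 1) (1/(x+((n:ℝ)+1))) * -(1/(x+((n:ℝ)+1))^2)))|
      = |∑' n : ℕ, ((sigma_aux x n - sigma_aux x (n+1)) * G_aux g x n + b_aux g x n)| := by
        rw [tsum_congr hfd]
    _ = |(∑' n : ℕ, (sigma_aux x n - sigma_aux x (n+1)) * G_aux g x n)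
        + ∑' n : ℕ, b_aux g x n| := by rw [Summable.tsum_add hsd hsb]
    _ = |(∑' n : ℕ, sigma_aux x (n+1) * (G_aux g x (n+1) - G_aux g x n))
        + ∑' n : ℕ, b_aux g x n| := by rw [habel]
    _ ≤ |∑' n : ℕ, sigma_aux x (n+1) * (G_aux g x (n+1) - G_aux g x n)|
        + |∑' n : ℕ, b_aux g x n| := abs_add_le _ _
    _ ≤ (∑' n : ℕ, |sigma_aux x (n+1) * (G_aux g x (n+1) - G_aux g x n)|)
        + ∑' n : ℕ, |b_aux g x n| :=
        add_le_add (abs_tsum_le_tsum_abs' hse_abs) (abs_tsum_le_tsum_abs' hsb_abs)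
    _ = ∑' n : ℕ, (|sigma_aux x (n+1) * (G_aux g x (n+1) - G_aux g x n)| + |b_aux g x n|) :=
        (Summable.tsum_add hse_abs hsb_abs).symm
    _ ≤ ∑' n : ℕ, M * (1/((n:ℝ)+2)^3 + 1/(((n:ℝ)+1)^3*((n:ℝ)+2))) := by
        refine Summable.tsum_le_tsum (fun n => ?_) (hse_abs.add hsb_abs) hbeta
        have h1 := hterm1 n
        have h2 := hterm2 n
        have h3 := mul_le_mul_of_nonneg_left (hkey n) hM0
        nlinarith
    _ = M * ∑' n : ℕ, (1/((n:ℝ)+2)^3 + 1/(((n:ℝ)+1)^3*((n:ℝ)+2))) := tsum_mul_left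
    _ = M * (2 * zetaR 3 - zetaR 2) := by rw [tsum_beta]
    _ = (2 * zetaR 3 - zetaR 2) * M := mul_comm _ _
end
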